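/- arXiv:2104.10356 — 4 statements merged into one kernel-verified Lean document; each statement's English description precedes it below -/
import Mathlib

section
/- Let f be a twice continuously differentiable function on n×m real matrices (or on n×n symmetric matrices) satisfying the δ-RIP_{2r,2r} property with δ ∈ [0,1), and let M* be its global minimizer over the set of matrices of rank at most r (respectively, symmetric positive semidefinite matrices of rank at most r), with ∇f(M*) = 0 and rank(M*) ≤ r. Let M be any matrix of rank at most r in the feasible set, and let M₊ be any minimizer of ‖K − (M − (1/(1+δ))∇f(M))‖_F over all K in the feasible set (a Frobenius-orthogonal projection of the gradient step onto the rank-≤r manifold). Then f(M₊) − f(M*) ≤ (2δ/(1−δ)) · (f(M) − f(M*)). -/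
set_option maxHeartbeats 1000000

open Matrix

attribute [local instance] Matrix.frobeniusSeminormedAddCommGroup
  Matrix.frobeniusNormedAddCommGroup Matrix.frobeniusNormedSpace

/-- Hessian quadratic/bilinear form of `f` at `x`, evaluated at directions `v, w`. -/
noncomputable def hess {E : Type*} [NormedAddCommGroup E] [NormedSpace ℝ E]
    (f : E → ℝ) (x v w : E) : ℝ :=
  iteratedFDeriv ℝ 2 f x ![v, w]

/-- Second-order critical point: vanishing gradient and positive semidefinite Hessian. -/
def IsSOCP {E : Type*} [NormedAddCommGroup E] [NormedSpace ℝ E]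
    (f : E → ℝ) (x : E) : Prop :=
  fderiv ℝ f x = 0 ∧ ∀ v : E, 0 ≤ hess f x v v

/-- The `δ`-RIP₂ᵣ,₂ₜ property (Frobenius norm). -/
def RIP {I J : Type*} [Fintype I] [Fintype J]
    (r t : ℕ) (δ : ℝ) (f : Matrix I J ℝ → ℝ) : Prop :=
  ∀ M K : Matrix I J ℝ, M.rank ≤ 2 * r → K.rank ≤ 2 * t →
    (1 - δ) * ‖K‖ ^ 2 ≤ hess f M K K ∧ hess f M K K ≤ (1 + δ) * ‖K‖ ^ 2

/-- The `κ`-BDP₂ₜ property. -/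
def BDP {I J : Type*} [Fintype I] [Fintype J]
    (t : ℕ) (κ : ℝ) (f : Matrix I J ℝ → ℝ) : Prop :=
  ∀ M M' K L : Matrix I J ℝ, M.rank ≤ 2 * t → M'.rank ≤ 2 * t →
    K.rank ≤ 2 * t → L.rank ≤ 2 * t →
    |hess f M K L - hess f M' K L| ≤ κ * ‖K‖ * ‖L‖

/-- Gradient of `f` at `M`, as a matrix (w.r.t. the Frobenius inner product). -/
noncomputable def mgrad {I J : Type*} [Fintype I] [Fintype J] [DecidableEq I] [DecidableEq J]
    (f : Matrix I J ℝ → ℝ) (M : Matrix I J ℝ) : Matrix I J ℝ :=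
  Matrix.of fun i j => fderiv ℝ f M (Matrix.single i j 1)

/-- Trace inner product `⟨X, Y⟩ = tr(Xᵀ Y)` of matrices. -/
noncomputable def minner {I J : Type*} [Fintype I] [Fintype J]
    (X Y : Matrix I J ℝ) : ℝ :=
  Matrix.trace (Xᵀ * Y)

/-- Objective of the factorized asymmetric problem (3). -/
noncomputable def ha {n m r : ℕ} (f : Matrix (Fin n) (Fin m) ℝ → ℝ)
    (p : Matrix (Fin n) (Fin r) ℝ × Matrix (Fin m) (Fin r) ℝ) : ℝ :=
  f (p.1 * p.2ᵀ)

/-- Objective of the regularized asymmetric problem (5). -/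
noncomputable def rhoA {n m r : ℕ} (f : Matrix (Fin n) (Fin m) ℝ → ℝ) (μ : ℝ)
    (p : Matrix (Fin n) (Fin r) ℝ × Matrix (Fin m) (Fin r) ℝ) : ℝ :=
  f (p.1 * p.2ᵀ) + μ / 4 * ‖p.1ᵀ * p.1 - p.2ᵀ * p.2‖ ^ 2

/-- Objective of the symmetric factorized problem (4). -/
noncomputable def hs {n r : ℕ} (f : Matrix (Fin n) (Fin n) ℝ → ℝ)
    (U : Matrix (Fin n) (Fin r) ℝ) : ℝ :=
  f (U * Uᵀ)

/- ### Auxiliary lemmas -/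

lemma hess_eq' {E : Type*} [NormedAddCommGroup E] [NormedSpace ℝ E]
    (f : E → ℝ) (x v w : E) : hess f x v w = fderiv ℝ (fderiv ℝ f) x v w := by
  rw [hess, iteratedFDeriv_two_apply]
  simp

lemma hess_neg' {E : Type*} [NormedAddCommGroup E] [NormedSpace ℝ E]
    (f : E → ℝ) (x v w : E) : hess (fun y => -f y) x v w = - hess f x v w := by
  rw [hess, hess]
  rw [show (fun y => -f y) = -f from rfl, iteratedFDeriv_neg_apply]
  simp

lemma taylor_upper' {E : Type*} [NormedAddCommGroup E] [NormedSpace ℝ E]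
    (f : E → ℝ) (hf : ContDiff ℝ 2 f) (X D : E) (U : ℝ)
    (hU : ∀ t ∈ Set.Icc (0:ℝ) 1, hess f (X + t • D) D D ≤ U) :
    f (X + D) ≤ f X + fderiv ℝ f X D + U / 2 := by
  have hf1 : Differentiable ℝ f := hf.differentiable two_ne_zero
  have hdf : ContDiff ℝ 1 (fderiv ℝ f) := hf.fderiv_right (le_refl 2)
  have hdf1 : Differentiable ℝ (fderiv ℝ f) := hdf.differentiable one_ne_zero
  have hline : ∀ t : ℝ, HasDerivAt (fun s : ℝ => X + s • D) D t := by
    intro t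
    simpa using ((hasDerivAt_id t).smul_const D).const_add X
  set c : ℝ := fderiv ℝ f X D with hc
  have hφ : ∀ t : ℝ, HasDerivAt (fun s : ℝ => f (X + s • D))
      (fderiv ℝ f (X + t • D) D) t := fun t =>
    ((hf1 _).hasFDerivAt.comp_hasDerivAt t (hline t))
  have hφ' : ∀ t : ℝ, HasDerivAt (fun s : ℝ => fderiv ℝ f (X + s • D) D)
      (hess f (X + t • D) D D) t := by
    intro t
    have h1 : HasDerivAt (fun s : ℝ => fderiv ℝ f (X + s • D))
        (fderiv ℝ (fderiv ℝ f) (X + t • D) D) t :=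
      ((hdf1 _).hasFDerivAt.comp_hasDerivAt t (hline t))
    have h2 := h1.clm_apply (hasDerivAt_const t D)
    simpa [hess_eq'] using h2
  set G : ℝ → ℝ := fun t => f X + t * c + U / 2 * t ^ 2 - f (X + t • D) with hG
  set G' : ℝ → ℝ := fun t => c + U * t - fderiv ℝ f (X + t • D) D with hG'
  have hGd : ∀ t : ℝ, HasDerivAt G (G' t) t := by
    intro t
    have h1 : HasDerivAt (fun s : ℝ => f X + s * c + U / 2 * s ^ 2) (c + U * t) t := by
      have := (((hasDerivAt_id t).mul_const c).const_add (f X)).add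
        ((hasDerivAt_pow 2 t).const_mul (U / 2))
      exact this.congr_deriv (by norm_num [mul_comm]; ring)
    exact h1.sub (hφ t)
  have hG'd : ∀ t : ℝ, HasDerivAt G' (U - hess f (X + t • D) D D) t := by
    intro t
    have h1 : HasDerivAt (fun s : ℝ => c + U * s) U t := by
      simpa using ((hasDerivAt_id t).const_mul U).const_add c
    exact h1.sub (hφ' t)
  have hφ0 : fderiv ℝ f (X + (0:ℝ) • D) D = c := by simp [hc]
  have hG'0 : G' 0 = 0 := by simp [hG', hφ0, hc]
  have m1 : MonotoneOn G' (Set.Icc (0:ℝ) 1) := by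
    apply monotoneOn_of_deriv_nonneg (convex_Icc 0 1)
    · exact (Differentiable.continuous (fun t => (hG'd t).differentiableAt)).continuousOn
    · exact (Differentiable.differentiableOn (fun t => (hG'd t).differentiableAt))
    · intro t ht
      rw [(hG'd t).deriv]
      rw [interior_Icc] at ht
      have := hU t ⟨le_of_lt ht.1, le_of_lt ht.2⟩
      linarith
  have hG'nonneg : ∀ t ∈ Set.Icc (0:ℝ) 1, 0 ≤ G' t := by
    intro t ht
    have := m1 (Set.left_mem_Icc.mpr zero_le_one) ht ht.1
    rw [hG'0] at this
    exact this
  have m2 : MonotoneOn G (Set.Icc (0:ℝ) 1) := by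
    apply monotoneOn_of_deriv_nonneg (convex_Icc 0 1)
    · exact (Differentiable.continuous (fun t => (hGd t).differentiableAt)).continuousOn
    · exact (Differentiable.differentiableOn (fun t => (hGd t).differentiableAt))
    · intro t ht
      rw [(hGd t).deriv]
      rw [interior_Icc] at ht
      exact hG'nonneg t ⟨le_of_lt ht.1, le_of_lt ht.2⟩
  have := m2 (Set.left_mem_Icc.mpr zero_le_one) (Set.right_mem_Icc.mpr zero_le_one) zero_le_one
  simp [hG] at this
  linarith

lemma taylor_lower' {E : Type*} [NormedAddCommGroup E] [NormedSpace ℝ E]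
    (f : E → ℝ) (hf : ContDiff ℝ 2 f) (X D : E) (L : ℝ)
    (hL : ∀ t ∈ Set.Icc (0:ℝ) 1, L ≤ hess f (X + t • D) D D) :
    f X + fderiv ℝ f X D + L / 2 ≤ f (X + D) := by
  have h := taylor_upper' (fun x => -f x) hf.neg X D (-L) ?_
  · rw [fderiv_fun_neg] at h
    simp only [ContinuousLinearMap.neg_apply] at h
    linarith
  · intro t ht
    rw [hess_neg']
    have := hL t ht
    linarith

lemma myrank_add_le {I J : Type*} [Fintype I] [Fintype J] (A B : Matrix I J ℝ) :
    (A + B).rank ≤ A.rank + B.rank := by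
  classical
  have hle : LinearMap.range (A + B).mulVecLin ≤
      LinearMap.range A.mulVecLin ⊔ LinearMap.range B.mulVecLin := by
    rintro x ⟨v, rfl⟩
    rw [Matrix.mulVecLin_add]
    exact Submodule.add_mem_sup (LinearMap.mem_range_self _ v) (LinearMap.mem_range_self _ v)
  calc (A + B).rank ≤ Module.finrank ℝ
        ↥(LinearMap.range A.mulVecLin ⊔ LinearMap.range B.mulVecLin) :=
        Submodule.finrank_mono hle
    _ ≤ A.rank + B.rank := Submodule.finrank_add_le_finrank_add_finrank _ _

lemma myrank_smul_le {I J : Type*} [Fintype I] [Fintype J] (c : ℝ) (A : Matrix I J ℝ) :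
    (c • A).rank ≤ A.rank := by
  classical
  have hle : LinearMap.range (c • A).mulVecLin ≤ LinearMap.range A.mulVecLin := by
    rintro x ⟨v, rfl⟩
    refine ⟨c • v, ?_⟩
    simp [Matrix.mulVecLin, Matrix.mulVec_smul, Matrix.smul_mulVec]
  exact Submodule.finrank_mono hle

noncomputable def inn {I J : Type*} [Fintype I] [Fintype J]
    (A B : Matrix I J ℝ) : ℝ := ∑ i, ∑ j, A i j * B i j

lemma sq_fro {I J : Type*} [Fintype I] [Fintype J] (A : Matrix I J ℝ) :
    ‖A‖ ^ 2 = ∑ i, ∑ j, (A i j) ^ 2 := by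
  rw [Matrix.frobenius_norm_def]
  rw [← Real.rpow_natCast _ 2, ← Real.rpow_mul (by positivity)]
  norm_num

lemma fro_expand {I J : Type*} [Fintype I] [Fintype J] (A B : Matrix I J ℝ) :
    ‖A + B‖ ^ 2 = ‖A‖ ^ 2 + 2 * inn A B + ‖B‖ ^ 2 := by
  simp only [sq_fro, inn, Matrix.add_apply, Finset.mul_sum]
  rw [← Finset.sum_add_distrib, ← Finset.sum_add_distrib]
  apply Finset.sum_congr rfl
  intro i _
  rw [← Finset.sum_add_distrib, ← Finset.sum_add_distrib]
  apply Finset.sum_congr rfl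
  intro j _
  ring

lemma inn_smul_right {I J : Type*} [Fintype I] [Fintype J] (c : ℝ) (A B : Matrix I J ℝ) :
    inn A (c • B) = c * inn A B := by
  simp only [inn, Matrix.smul_apply, smul_eq_mul, Finset.mul_sum]
  apply Finset.sum_congr rfl
  intro i _
  apply Finset.sum_congr rfl
  intro j _
  ring

lemma inn_comm {I J : Type*} [Fintype I] [Fintype J] (A B : Matrix I J ℝ) :
    inn A B = inn B A := by
  simp only [inn]
  apply Finset.sum_congr rfl
  intro i _
  apply Finset.sum_congr rfl
  intro j _
  ring

lemma grad_repr {I J : Type*} [Fintype I] [Fintype J] [DecidableEq I] [DecidableEq J]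
    (f : Matrix I J ℝ → ℝ) (M D : Matrix I J ℝ) :
    fderiv ℝ f M D = inn (mgrad f M) D := by
  conv_lhs => rw [matrix_eq_sum_single D]
  rw [map_sum]
  unfold inn mgrad
  apply Finset.sum_congr rfl
  intro i _
  rw [map_sum]
  apply Finset.sum_congr rfl
  intro j _
  have h : Matrix.single i j (D i j) = D i j • Matrix.single i j (1:ℝ) := by
    rw [Matrix.smul_single]
    simp
  rw [h, _root_.map_smul]
  simp [mul_comm]

/-- One step of the projected gradient (SVP) iteration decreases the optimality gap
by a factor `2δ/(1-δ)`. -/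
theorem statement0 (n m r : ℕ) (δ : ℝ) (hδ0 : 0 ≤ δ) (hδ1 : δ < 1)
    (f : Matrix (Fin n) (Fin m) ℝ → ℝ) (hf : ContDiff ℝ 2 f) (hrip : RIP r r δ f)
    (Mstar : Matrix (Fin n) (Fin m) ℝ)
    (hmin : ∀ K : Matrix (Fin n) (Fin m) ℝ, K.rank ≤ r → f Mstar ≤ f K)
    (hcrit : fderiv ℝ f Mstar = 0) (hrankstar : Mstar.rank ≤ r)
    (M Mplus : Matrix (Fin n) (Fin m) ℝ) (hM : M.rank ≤ r) (hMplus : Mplus.rank ≤ r)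
    (hproj : ∀ K : Matrix (Fin n) (Fin m) ℝ, K.rank ≤ r →
      ‖Mplus - (M - (1 / (1 + δ)) • mgrad f M)‖ ≤ ‖K - (M - (1 / (1 + δ)) • mgrad f M)‖) :
    f Mplus - f Mstar ≤ 2 * δ / (1 - δ) * (f M - f Mstar) := by
  have h1δ : (0:ℝ) < 1 + δ := by linarith
  have h1mδ : (0:ℝ) < 1 - δ := by linarith
  -- rank facts
  have hrank2 : ∀ X Y : Matrix (Fin n) (Fin m) ℝ, X.rank ≤ r → Y.rank ≤ r →
      (Y - X).rank ≤ 2 * r := by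
    intro X Y hX hY
    have e : Y - X = Y + (-1 : ℝ) • X := by rw [neg_one_smul, ← sub_eq_add_neg]
    rw [e]
    calc (Y + (-1:ℝ) • X).rank ≤ Y.rank + ((-1:ℝ) • X).rank := myrank_add_le _ _
      _ ≤ Y.rank + X.rank := by
          have := myrank_smul_le (-1:ℝ) X
          omega
      _ ≤ 2 * r := by omega
  have hrankpath : ∀ X Y : Matrix (Fin n) (Fin m) ℝ, X.rank ≤ r → Y.rank ≤ r →
      ∀ t : ℝ, (X + t • (Y - X)).rank ≤ 2 * r := by
    intro X Y hX hY t
    have e : X + t • (Y - X) = (1 - t) • X + t • Y := by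
      ext i j
      simp [Matrix.add_apply, Matrix.smul_apply, Matrix.sub_apply]
      ring
    rw [e]
    calc ((1-t) • X + t • Y).rank ≤ ((1-t) • X).rank + (t • Y).rank := myrank_add_le _ _
      _ ≤ X.rank + Y.rank := by
          have h1 := myrank_smul_le (1-t) X
          have h2 := myrank_smul_le t Y
          omega
      _ ≤ 2 * r := by omega
  -- Taylor bounds between feasible points
  have Tub : ∀ X Y : Matrix (Fin n) (Fin m) ℝ, X.rank ≤ r → Y.rank ≤ r →
      f Y ≤ f X + fderiv ℝ f X (Y - X) + (1 + δ) / 2 * ‖Y - X‖ ^ 2 := by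
    intro X Y hX hY
    have h := taylor_upper' f hf X (Y - X) ((1 + δ) * ‖Y - X‖ ^ 2) ?_
    · have e : X + (Y - X) = Y := by abel
      rw [e] at h
      convert h using 2
      · exact rfl
      · ring
    · intro t ht
      exact (hrip (X + t • (Y - X)) (Y - X) (hrankpath X Y hX hY t) (hrank2 X Y hX hY)).2
  have Tlb : ∀ X Y : Matrix (Fin n) (Fin m) ℝ, X.rank ≤ r → Y.rank ≤ r →
      f X + fderiv ℝ f X (Y - X) + (1 - δ) / 2 * ‖Y - X‖ ^ 2 ≤ f Y := by
    intro X Y hX hY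
    have h := taylor_lower' f hf X (Y - X) ((1 - δ) * ‖Y - X‖ ^ 2) ?_
    · have e : X + (Y - X) = Y := by abel
      rw [e] at h
      convert h using 2
      · exact rfl
      · ring
    · intro t ht
      exact (hrip (X + t • (Y - X)) (Y - X) (hrankpath X Y hX hY t) (hrank2 X Y hX hY)).1
  set g : Matrix (Fin n) (Fin m) ℝ := mgrad f M with hg
  set η : ℝ := 1 / (1 + δ) with hη
  set Z : Matrix (Fin n) (Fin m) ℝ := M - η • g with hZZ
  have hiden : ∀ P : Matrix (Fin n) (Fin m) ℝ,
      ‖P - Z‖ ^ 2 = ‖P - M‖ ^ 2 + 2 * η * inn g (P - M) + η ^ 2 * ‖g‖ ^ 2 := by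
    intro P
    have e1 : P - Z = (P - M) + η • g := by rw [hZZ]; abel
    rw [e1, fro_expand, inn_smul_right, norm_smul, mul_pow, Real.norm_eq_abs, sq_abs,
      inn_comm]
    ring
  -- projection step
  have hsq : ‖Mplus - Z‖ ^ 2 ≤ ‖Mstar - Z‖ ^ 2 :=
    pow_le_pow_left₀ (norm_nonneg _) (hproj Mstar hrankstar) 2
  have h3 : ‖Mplus - M‖ ^ 2 + 2 * η * inn g (Mplus - M) ≤
      ‖Mstar - M‖ ^ 2 + 2 * η * inn g (Mstar - M) := by
    have e1 := hiden Mplus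
    have e2 := hiden Mstar
    linarith
  have key : inn g (Mplus - M) + (1 + δ) / 2 * ‖Mplus - M‖ ^ 2 ≤
      inn g (Mstar - M) + (1 + δ) / 2 * ‖Mstar - M‖ ^ 2 := by
    have h5 := mul_le_mul_of_nonneg_left h3 (le_of_lt (by positivity : (0:ℝ) < (1 + δ) / 2))
    have e3 : ∀ B S : ℝ, (1 + δ) / 2 * (S + 2 * η * B) = B + (1 + δ) / 2 * S := by
      intro B S
      rw [hη]
      field_simp
      ring
    rw [e3, e3] at h5
    exact h5
  -- chain of inequalities
  have step1 : f Mplus ≤ f M + inn g (Mplus - M) + (1 + δ) / 2 * ‖Mplus - M‖ ^ 2 := by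
    have := Tub M Mplus hM hMplus
    rwa [grad_repr, ← hg] at this
  have step3 : f M + inn g (Mstar - M) + (1 - δ) / 2 * ‖Mstar - M‖ ^ 2 ≤ f Mstar := by
    have := Tlb M Mstar hM hrankstar
    rwa [grad_repr, ← hg] at this
  have step4 : f Mstar + (1 - δ) / 2 * ‖M - Mstar‖ ^ 2 ≤ f M := by
    have := Tlb Mstar M hrankstar hM
    rw [hcrit] at this
    simpa using this
  have hnorm : ‖Mstar - M‖ = ‖M - Mstar‖ := norm_sub_rev _ _
  set S : ℝ := ‖M - Mstar‖ ^ 2 with hS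
  have hstep : f Mplus - f Mstar ≤ δ * S := by
    rw [hS, ← hnorm]
    nlinarith [step1, key, step3]
  have hgap : (1 - δ) / 2 * S ≤ f M - f Mstar := by linarith
  have hfinal : δ * S ≤ 2 * δ / (1 - δ) * (f M - f Mstar) := by
    rw [div_mul_eq_mul_div, le_div_iff₀ h1mδ]
    linarith [mul_le_mul_of_nonneg_left hgap hδ0]
  linarith
end

section
/- Let f satisfy the δ-RIP_{2r,2r} property with δ ∈ (0, 1/3), let M* be its global minimizer over the low-rank feasible set with ∇f(M*) = 0 and rank(M*) ≤ r, and run the Singular Value Projection algorithm with step size η = 1/(1+δ): starting from M₀ in the feasible set, M_{t+1} is any Frobenius-orthogonal projection of M_t − η∇f(M_t) onto the feasible set. Then for every ε > 0, after T := ⌈ log[(f(M₀) − f(M*))/ε] / log[(1−δ)/(2δ)] ⌉ iterations the iterate M_T lies in the feasible set and satisfies f(M_T) − f(M*) ≤ ε. -/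
open Matrix

attribute [local instance] Matrix.frobeniusSeminormedAddCommGroup
  Matrix.frobeniusNormedAddCommGroup Matrix.frobeniusNormedSpace

/-! ### Auxiliary lemmas -/

section AuxReal

/-- One-dimensional Taylor upper bound via double monotonicity. -/
lemma taylor1d_upper (φ φ' φ'' : ℝ → ℝ) (C : ℝ)
    (hd1 : ∀ s, HasDerivAt φ (φ' s) s) (hd2 : ∀ s, HasDerivAt φ' (φ'' s) s)
    (hub : ∀ s ∈ Set.Icc (0:ℝ) 1, φ'' s ≤ C) :
    φ 1 ≤ φ 0 + φ' 0 + C / 2 := by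
  set ψ : ℝ → ℝ := fun s => φ 0 + s * φ' 0 + C * s ^ 2 / 2 - φ s with hψ
  have hdψ : ∀ s, HasDerivAt ψ (φ' 0 + C * s - φ' s) s := by
    intro s
    have h1 : HasDerivAt (fun s : ℝ => φ 0 + s * φ' 0 + C * s ^ 2 / 2)
        (φ' 0 + C * s) s := by
      have : HasDerivAt (fun s : ℝ => φ 0 + s * φ' 0 + C * s ^ 2 / 2)
          (0 + (1 * φ' 0) + (C * (2 * s ^ 1) / 2)) s := by
        exact ((hasDerivAt_const s (φ 0)).add
          ((hasDerivAt_id s).mul_const (φ' 0))).add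
          (((hasDerivAt_pow 2 s).const_mul C).div_const 2)
      convert this using 1; ring
    exact h1.sub (hd1 s)
  set ψ' : ℝ → ℝ := fun s => φ' 0 + C * s - φ' s with hψ'
  have hdψ' : ∀ s, HasDerivAt ψ' (C - φ'' s) s := by
    intro s
    have h1 : HasDerivAt (fun s : ℝ => φ' 0 + C * s) C s := by
      have h := ((hasDerivAt_id s).const_mul C).const_add (φ' 0)
      simp only [mul_one] at h; exact h
    exact h1.sub (hd2 s)
  have hmono' : MonotoneOn ψ' (Set.Icc 0 1) := by
    refine monotoneOn_of_deriv_nonneg (convex_Icc 0 1)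
      (fun s _ => (hdψ' s).continuousAt.continuousWithinAt)
      (fun s _ => ((hdψ' s).differentiableAt).differentiableWithinAt) ?_
    intro s hs
    rw [(hdψ' s).deriv]
    rw [interior_Icc] at hs
    have := hub s ⟨le_of_lt hs.1, le_of_lt hs.2⟩
    linarith
  have hψ'0 : ψ' 0 = 0 := by simp [hψ']
  have hψ'nonneg : ∀ s ∈ Set.Icc (0:ℝ) 1, 0 ≤ ψ' s := by
    intro s hs
    have := hmono' (Set.left_mem_Icc.2 zero_le_one) hs hs.1
    rw [hψ'0] at this; exact this
  have hmono : MonotoneOn ψ (Set.Icc 0 1) := by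
    refine monotoneOn_of_deriv_nonneg (convex_Icc 0 1)
      (fun s _ => (hdψ s).continuousAt.continuousWithinAt)
      (fun s _ => ((hdψ s).differentiableAt).differentiableWithinAt) ?_
    intro s hs
    rw [(hdψ s).deriv]
    rw [interior_Icc] at hs
    exact hψ'nonneg s ⟨le_of_lt hs.1, le_of_lt hs.2⟩
  have := hmono (Set.left_mem_Icc.2 zero_le_one) (Set.right_mem_Icc.2 zero_le_one) zero_le_one
  simp only [hψ] at this
  nlinarith [this]

end AuxReal

section AuxHess

variable {E : Type*} [NormedAddCommGroup E] [NormedSpace ℝ E] (f : E → ℝ) (x v : E)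

lemma line_hasDerivAt1 (hf : ContDiff ℝ 2 f) (s : ℝ) :
    HasDerivAt (fun s : ℝ => f (x + s • v)) (fderiv ℝ f (x + s • v) v) s := by
  have hγ : HasDerivAt (fun s : ℝ => x + s • v) v s := by
    simpa using ((hasDerivAt_id s).smul_const v).const_add x
  exact (hf.differentiable (by norm_num) (x + s • v)).hasFDerivAt.comp_hasDerivAt s hγ

lemma line_hasDerivAt2 (hf : ContDiff ℝ 2 f) (s : ℝ) :
    HasDerivAt (fun s : ℝ => fderiv ℝ f (x + s • v) v)
      (hess f (x + s • v) v v) s := by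
  have hγ : HasDerivAt (fun s : ℝ => x + s • v) v s := by
    simpa using ((hasDerivAt_id s).smul_const v).const_add x
  have hg : ContDiff ℝ 1 (fderiv ℝ f) := hf.fderiv_right (by norm_num)
  have hA : HasFDerivAt (fun y => fderiv ℝ f y v)
      ((ContinuousLinearMap.apply ℝ ℝ v).comp (fderiv ℝ (fderiv ℝ f) (x + s • v)))
      (x + s • v) :=
    (ContinuousLinearMap.apply ℝ ℝ v).hasFDerivAt.comp _
      (hg.differentiable (by norm_num) (x + s • v)).hasFDerivAt
  have := hA.comp_hasDerivAt s hγ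
  rw [hess_eq']
  simp only [ContinuousLinearMap.comp_apply, ContinuousLinearMap.apply_apply] at this
  exact this

end AuxHess

section AuxMatrix

variable {nn mm : ℕ}

/-- Entrywise (Frobenius) inner product. -/
noncomputable def mip (X Y : Matrix (Fin nn) (Fin mm) ℝ) : ℝ := ∑ i, ∑ j, X i j * Y i j

lemma norm_sq_eq_mip (X : Matrix (Fin nn) (Fin mm) ℝ) : ‖X‖ ^ 2 = mip X X := by
  have h : ‖X‖ = Real.sqrt (∑ i, ∑ j, (X i j)^2) := by
    rw [frobenius_norm_def, Real.sqrt_eq_rpow]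
    congr 1
    refine Finset.sum_congr rfl fun i _ => Finset.sum_congr rfl fun j _ => ?_
    rw [Real.rpow_two, Real.norm_eq_abs, sq_abs]
  rw [h, Real.sq_sqrt (by positivity)]
  simp [mip, sq]

lemma mip_expand (X Y : Matrix (Fin nn) (Fin mm) ℝ) :
    ‖X + Y‖ ^ 2 = ‖X‖^2 + 2 * mip X Y + ‖Y‖^2 := by
  simp only [norm_sq_eq_mip, mip, Matrix.add_apply]
  rw [Finset.mul_sum, ← Finset.sum_add_distrib, ← Finset.sum_add_distrib]
  refine Finset.sum_congr rfl fun i _ => ?_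
  rw [Finset.mul_sum, ← Finset.sum_add_distrib, ← Finset.sum_add_distrib]
  exact Finset.sum_congr rfl fun j _ => by ring

lemma mip_smul_right (c : ℝ) (X Y : Matrix (Fin nn) (Fin mm) ℝ) :
    mip X (c • Y) = c * mip X Y := by
  simp only [mip, Matrix.smul_apply, smul_eq_mul, Finset.mul_sum]
  exact Finset.sum_congr rfl fun i _ => Finset.sum_congr rfl fun j _ => by ring

lemma mip_comm (X Y : Matrix (Fin nn) (Fin mm) ℝ) : mip X Y = mip Y X := by
  simp only [mip]
  exact Finset.sum_congr rfl fun i _ => Finset.sum_congr rfl fun j _ => mul_comm _ _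

lemma fderiv_eq_mip (f : Matrix (Fin nn) (Fin mm) ℝ → ℝ) (M K : Matrix (Fin nn) (Fin mm) ℝ) :
    fderiv ℝ f M K = mip (mgrad f M) K := by
  conv_lhs => rw [matrix_eq_sum_single K]
  rw [map_sum]
  unfold mip mgrad
  refine Finset.sum_congr rfl fun i _ => ?_
  rw [map_sum]
  refine Finset.sum_congr rfl fun j _ => ?_
  have h1 : Matrix.single i j (K i j) = (K i j) • Matrix.single i j (1:ℝ) := by
    rw [Matrix.smul_single, smul_eq_mul, mul_one]
  rw [h1, _root_.map_smul]
  simp [mul_comm]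

lemma matrank_add_le (A B : Matrix (Fin nn) (Fin mm) ℝ) :
    (A + B).rank ≤ A.rank + B.rank := by
  classical
  unfold Matrix.rank
  have hr : LinearMap.range (A + B).mulVecLin ≤
      LinearMap.range A.mulVecLin ⊔ LinearMap.range B.mulVecLin := by
    rintro x ⟨v, rfl⟩
    rw [Matrix.mulVecLin_add]
    exact Submodule.add_mem_sup ⟨v, rfl⟩ ⟨v, rfl⟩
  calc Module.finrank ℝ ↥(LinearMap.range (A + B).mulVecLin)
      ≤ Module.finrank ℝ ↥(LinearMap.range A.mulVecLin ⊔ LinearMap.range B.mulVecLin) :=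
        Submodule.finrank_mono hr
    _ ≤ _ := by
        have := Submodule.finrank_add_le_finrank_add_finrank
          (LinearMap.range A.mulVecLin) (LinearMap.range B.mulVecLin)
        omega

lemma matrank_smul_le (c : ℝ) (A : Matrix (Fin nn) (Fin mm) ℝ) :
    (c • A).rank ≤ A.rank := by
  unfold Matrix.rank
  refine Submodule.finrank_mono ?_
  rintro x ⟨v, rfl⟩
  exact ⟨c • v, by simp [Matrix.mulVecLin, Matrix.mulVec_smul, Matrix.smul_mulVec]⟩

/-- Second-order Taylor bounds along a segment between two rank-`≤ r` matrices,
under the RIP hypothesis. -/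
lemma taylor_bounds {r : ℕ} {δ : ℝ} (f : Matrix (Fin nn) (Fin mm) ℝ → ℝ)
    (hf : ContDiff ℝ 2 f) (hrip : RIP r r δ f)
    (x y : Matrix (Fin nn) (Fin mm) ℝ) (hx : x.rank ≤ r) (hy : y.rank ≤ r) :
    f y ≤ f x + fderiv ℝ f x (y - x) + (1 + δ) / 2 * ‖y - x‖ ^ 2 ∧
    f x + fderiv ℝ f x (y - x) + (1 - δ) / 2 * ‖y - x‖ ^ 2 ≤ f y := by
  set v := y - x with hv
  have hvrank : v.rank ≤ 2 * r := by
    have h1 : v = y + (-1 : ℝ) • x := by rw [hv]; rw [neg_one_smul]; abel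
    calc v.rank ≤ y.rank + ((-1 : ℝ) • x).rank := h1 ▸ matrank_add_le y ((-1 : ℝ) • x)
      _ ≤ r + r := add_le_add hy (le_trans (matrank_smul_le _ _) hx)
      _ = 2 * r := by ring
  have hline : ∀ s : ℝ, (x + s • v).rank ≤ 2 * r := by
    intro s
    have h1 : x + s • v = (1 - s) • x + s • y := by rw [hv]; module
    calc (x + s • v).rank ≤ ((1 - s) • x).rank + (s • y).rank := h1 ▸ matrank_add_le _ _
      _ ≤ r + r := add_le_add (le_trans (matrank_smul_le _ _) hx)
          (le_trans (matrank_smul_le _ _) hy)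
      _ = 2 * r := by ring
  have hhess := fun s : ℝ => hrip (x + s • v) v (hline s) hvrank
  have h10 : x + (1 : ℝ) • v = y := by rw [hv]; rw [one_smul]; abel
  have h00 : x + (0 : ℝ) • v = x := by rw [zero_smul, add_zero]
  constructor
  · have := taylor1d_upper (fun s : ℝ => f (x + s • v))
      (fun s : ℝ => fderiv ℝ f (x + s • v) v)
      (fun s : ℝ => hess f (x + s • v) v v) ((1 + δ) * ‖v‖ ^ 2)
      (line_hasDerivAt1 f x v hf) (line_hasDerivAt2 f x v hf)
      (fun s _ => (hhess s).2)
    simp only [h10, h00] at this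
    linarith
  · have := taylor1d_upper (fun s : ℝ => -f (x + s • v))
      (fun s : ℝ => -(fderiv ℝ f (x + s • v) v))
      (fun s : ℝ => -(hess f (x + s • v) v v)) (-((1 - δ) * ‖v‖ ^ 2))
      (fun s => (line_hasDerivAt1 f x v hf s).neg)
      (fun s => (line_hasDerivAt2 f x v hf s).neg)
      (fun s _ => by have := (hhess s).1; linarith)
    simp only [h10, h00] at this
    linarith

end AuxMatrix


/-- Linear convergence of the Singular Value Projection algorithm under `δ`-RIP with
`δ < 1/3` and step size `1/(1+δ)`. -/
theorem statement1 (n m r : ℕ) (δ : ℝ) (hδ0 : 0 < δ) (hδ1 : δ < 1 / 3)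
    (f : Matrix (Fin n) (Fin m) ℝ → ℝ) (hf : ContDiff ℝ 2 f) (hrip : RIP r r δ f)
    (Mstar : Matrix (Fin n) (Fin m) ℝ)
    (hmin : ∀ K : Matrix (Fin n) (Fin m) ℝ, K.rank ≤ r → f Mstar ≤ f K)
    (hcrit : fderiv ℝ f Mstar = 0) (hrankstar : Mstar.rank ≤ r)
    (Mseq : ℕ → Matrix (Fin n) (Fin m) ℝ) (h0 : (Mseq 0).rank ≤ r)
    (hstep : ∀ t : ℕ, (Mseq (t + 1)).rank ≤ r ∧
      ∀ K : Matrix (Fin n) (Fin m) ℝ, K.rank ≤ r →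
        ‖Mseq (t + 1) - (Mseq t - (1 / (1 + δ)) • mgrad f (Mseq t))‖ ≤
          ‖K - (Mseq t - (1 / (1 + δ)) • mgrad f (Mseq t))‖)
    (ε : ℝ) (hε : 0 < ε) :
    (Mseq ⌈Real.log ((f (Mseq 0) - f Mstar) / ε) / Real.log ((1 - δ) / (2 * δ))⌉₊).rank ≤ r ∧
    f (Mseq ⌈Real.log ((f (Mseq 0) - f Mstar) / ε) / Real.log ((1 - δ) / (2 * δ))⌉₊) - f Mstar
      ≤ ε := by
  have h1δ : (0:ℝ) < 1 + δ := by linarith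
  have h1mδ : (0:ℝ) < 1 - δ := by linarith
  have hrank : ∀ t, (Mseq t).rank ≤ r := by
    intro t
    cases t with
    | zero => exact h0
    | succ t => exact (hstep t).1
  refine ⟨hrank _, ?_⟩
  set q : ℝ := 2 * δ / (1 - δ) with hq
  have hq0 : 0 < q := by positivity
  have hq1 : q < 1 := by rw [hq, div_lt_one h1mδ]; linarith
  have hepos : ∀ t, 0 ≤ f (Mseq t) - f Mstar := fun t => sub_nonneg.2 (hmin _ (hrank t))
  have hrec : ∀ t, f (Mseq (t + 1)) - f Mstar ≤ q * (f (Mseq t) - f Mstar) := by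
    intro t
    set Mt := Mseq t with hMt
    set Mt1 := Mseq (t + 1) with hMt1
    set G := mgrad f Mt with hG
    have hkey : ∀ A : Matrix (Fin n) (Fin m) ℝ,
        fderiv ℝ f Mt (A - Mt) + (1 + δ) / 2 * ‖A - Mt‖ ^ 2
          = (1 + δ) / 2 * ‖A - (Mt - (1 / (1 + δ)) • G)‖ ^ 2 - ‖G‖ ^ 2 / (2 * (1 + δ)) := by
      intro A
      have h1 : A - (Mt - (1 / (1 + δ)) • G) = (A - Mt) + (1 / (1 + δ)) • G := by abel
      rw [h1, mip_expand, fderiv_eq_mip, mip_comm, mip_smul_right, norm_smul]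
      have h2 : ‖(1 / (1 + δ) : ℝ)‖ = 1 / (1 + δ) := by
        rw [Real.norm_eq_abs, abs_of_pos (by positivity)]
      rw [h2]
      field_simp
      ring
    have hproj : fderiv ℝ f Mt (Mt1 - Mt) + (1 + δ) / 2 * ‖Mt1 - Mt‖ ^ 2
        ≤ fderiv ℝ f Mt (Mstar - Mt) + (1 + δ) / 2 * ‖Mstar - Mt‖ ^ 2 := by
      rw [hkey Mt1, hkey Mstar]
      have h3 := (hstep t).2 Mstar hrankstar
      have h4 : ‖Mt1 - (Mt - (1 / (1 + δ)) • G)‖ ^ 2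
          ≤ ‖Mstar - (Mt - (1 / (1 + δ)) • G)‖ ^ 2 :=
        pow_le_pow_left₀ (norm_nonneg _) h3 2
      nlinarith
    have hA := (taylor_bounds f hf hrip Mt Mt1 (hrank t) (hrank (t + 1))).1
    have hB := (taylor_bounds f hf hrip Mt Mstar (hrank t) hrankstar).2
    have hC := (taylor_bounds f hf hrip Mstar Mt hrankstar (hrank t)).2
    rw [hcrit] at hC
    simp only [ContinuousLinearMap.zero_apply] at hC
    have hnn : ‖Mstar - Mt‖ = ‖Mt - Mstar‖ := norm_sub_rev _ _
    have hstep1 : f Mt1 ≤ f Mstar + δ * ‖Mstar - Mt‖ ^ 2 := by linarith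
    have hstep2 : (1 - δ) / 2 * ‖Mt - Mstar‖ ^ 2 ≤ f Mt - f Mstar := by linarith
    have hid : q * ((1 - δ) / 2) = δ := by
      rw [hq]; field_simp
    calc f Mt1 - f Mstar ≤ δ * ‖Mstar - Mt‖ ^ 2 := by linarith
      _ = q * ((1 - δ) / 2) * ‖Mt - Mstar‖ ^ 2 := by rw [hid, hnn]
      _ = q * ((1 - δ) / 2 * ‖Mt - Mstar‖ ^ 2) := by ring
      _ ≤ q * (f Mt - f Mstar) := mul_le_mul_of_nonneg_left hstep2 hq0.le
  have hgeo : ∀ t, f (Mseq t) - f Mstar ≤ q ^ t * (f (Mseq 0) - f Mstar) := by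
    intro t
    induction t with
    | zero => simp
    | succ t ih =>
      calc f (Mseq (t + 1)) - f Mstar ≤ q * (f (Mseq t) - f Mstar) := hrec t
        _ ≤ q * (q ^ t * (f (Mseq 0) - f Mstar)) := mul_le_mul_of_nonneg_left ih hq0.le
        _ = q ^ (t + 1) * (f (Mseq 0) - f Mstar) := by ring
  set T := ⌈Real.log ((f (Mseq 0) - f Mstar) / ε) / Real.log ((1 - δ) / (2 * δ))⌉₊ with hT
  rcases le_or_gt (f (Mseq 0) - f Mstar) ε with h | h
  · calc f (Mseq T) - f Mstar ≤ q ^ T * (f (Mseq 0) - f Mstar) := hgeo T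
      _ ≤ 1 * (f (Mseq 0) - f Mstar) :=
        mul_le_mul_of_nonneg_right (pow_le_one₀ hq0.le hq1.le) (hepos 0)
      _ ≤ ε := by linarith
  · have he0 : 0 < f (Mseq 0) - f Mstar := lt_trans hε h
    have hinv : (1 - δ) / (2 * δ) = q⁻¹ := by rw [hq, inv_div]
    have hlogq : Real.log q < 0 := Real.log_neg hq0 hq1
    have hlogpos : 0 < Real.log ((1 - δ) / (2 * δ)) := by
      rw [hinv, Real.log_inv]; linarith
    have hceil : Real.log ((f (Mseq 0) - f Mstar) / ε) / Real.log ((1 - δ) / (2 * δ)) ≤ (T : ℝ) :=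
      Nat.le_ceil _
    have h5 : Real.log ((f (Mseq 0) - f Mstar) / ε) ≤ (T : ℝ) * Real.log ((1 - δ) / (2 * δ)) := by
      rw [div_le_iff₀ hlogpos] at hceil; linarith
    have h6 : Real.log (q ^ T) ≤ Real.log (ε / (f (Mseq 0) - f Mstar)) := by
      rw [Real.log_pow]
      rw [hinv, Real.log_inv] at h5
      have heq : Real.log (ε / (f (Mseq 0) - f Mstar))
          = - Real.log ((f (Mseq 0) - f Mstar) / ε) := by
        rw [← Real.log_inv]; congr 1; rw [inv_div]
      rw [heq]
      nlinarith
    have h7 : q ^ T ≤ ε / (f (Mseq 0) - f Mstar) :=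
      (Real.log_le_log_iff (pow_pos hq0 T) (div_pos hε he0)).1 h6
    calc f (Mseq T) - f Mstar ≤ q ^ T * (f (Mseq 0) - f Mstar) := hgeo T
      _ ≤ (ε / (f (Mseq 0) - f Mstar)) * (f (Mseq 0) - f Mstar) :=
        mul_le_mul_of_nonneg_right h7 (hepos 0)
      _ = ε := div_mul_cancel₀ _ (ne_of_gt he0)
end

section
/- Suppose the twice continuously differentiable function f_a : ℝ^{n×m} → ℝ satisfies the δ-RIP_{2r,2s} property and the κ-BDP_{2t} property, and set μ := (1−δ)/2. For a matrix N ∈ ℝ^{(n+m)×(n+m)} written in blocks N = [[N₁₁, N₁₂],[N₂₁, N₂₂]] with N₁₁ ∈ ℝ^{n×n}, N₁₂ ∈ ℝ^{n×m}, N₂₂ ∈ ℝ^{m×m}, define f̃(N) := f_a(N₁₂) + f_a(N₂₁ᵀ), g̃(N) := ‖N₁₁‖_F² + ‖N₂₂‖_F² − ‖N₁₂‖_F² − ‖N₂₁‖_F², and F(N) := f̃(N) + (μ/2)·g̃(N). Then: (i) for every U ∈ ℝ^{n×r}, V ∈ ℝ^{m×r} and W := (U; V) ∈ ℝ^{(n+m)×r},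 one has F(WWᵀ) = 2·[f_a(UVᵀ) + (μ/4)‖UᵀU − VᵀV‖_F²], so the regularized asymmetric problem (5) is equivalent to the symmetric problem min_{W ∈ ℝ^{(n+m)×r}} (2/(1+δ))·F(WWᵀ); and (ii) the function (2/(1+δ))·F satisfies the (2δ/(1+δ))-RIP_{2r,2s} property and the (2κ/(1+δ))-BDP_{2t} property. -/
open Matrix

attribute [local instance] Matrix.frobeniusSeminormedAddCommGroup
  Matrix.frobeniusNormedAddCommGroup Matrix.frobeniusNormedSpace

/-- The symmetric lift `F(N) = f̃(N) + (μ/2)·g̃(N)` of the asymmetric objective. -/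
noncomputable def tilF {n m : ℕ} (f : Matrix (Fin n) (Fin m) ℝ → ℝ) (μ : ℝ)
    (N : Matrix (Fin n ⊕ Fin m) (Fin n ⊕ Fin m) ℝ) : ℝ :=
  (f N.toBlocks₁₂ + f N.toBlocks₂₁ᵀ) +
    μ / 2 * (‖N.toBlocks₁₁‖ ^ 2 + ‖N.toBlocks₂₂‖ ^ 2 - ‖N.toBlocks₁₂‖ ^ 2 - ‖N.toBlocks₂₁‖ ^ 2)

noncomputable section AuxSect

open Matrix

/-- Entrywise (Frobenius) inner product of real matrices. -/
def fip {I J : Type*} [Fintype I] [Fintype J] (K L : Matrix I J ℝ) : ℝ :=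
  ∑ pq : I × J, K pq.1 pq.2 * L pq.1 pq.2

variable {I J : Type*} [Fintype I] [Fintype J]

lemma fip_eq (K L : Matrix I J ℝ) : fip K L = ∑ p, ∑ q, K p q * L p q := by
  rw [fip, Fintype.sum_prod_type]

lemma sq_norm_eq (X : Matrix I J ℝ) : ‖X‖ ^ 2 = fip X X := by
  rw [Matrix.frobenius_norm_def, ← Real.rpow_natCast _ 2, ← Real.rpow_mul (by positivity)]
  norm_num
  rw [fip_eq]
  exact Finset.sum_congr rfl fun p _ => Finset.sum_congr rfl fun q _ => (sq (X p q)).symm ▸ rfl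

def evalCLM (p : I) (q : J) : Matrix I J ℝ →L[ℝ] ℝ :=
  LinearMap.toContinuousLinearMap
    { toFun := fun X => X p q, map_add' := fun _ _ => rfl, map_smul' := fun _ _ => rfl }

@[simp] lemma evalCLM_apply (p : I) (q : J) (X : Matrix I J ℝ) : evalCLM p q X = X p q := rfl

/-- The sum-of-squares function. -/
def sqQ (X : Matrix I J ℝ) : ℝ := ∑ pq : I × J, (X pq.1 pq.2) ^ 2

lemma sqQ_eq_norm (X : Matrix I J ℝ) : sqQ X = ‖X‖ ^ 2 := by
  rw [sq_norm_eq, fip, sqQ]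
  exact Finset.sum_congr rfl fun pq _ => sq (X pq.1 pq.2)

lemma contDiff_sqQ : ContDiff ℝ 2 (sqQ (I := I) (J := J)) := by
  apply ContDiff.sum
  intro pq _
  exact ((evalCLM pq.1 pq.2).contDiff).pow 2

def DQ : Matrix I J ℝ →L[ℝ] Matrix I J ℝ →L[ℝ] ℝ :=
  LinearMap.toContinuousLinearMap
    { toFun := fun X => ∑ pq : I × J, (2 * X pq.1 pq.2) • evalCLM pq.1 pq.2
      map_add' := by
        intro X Y
        rw [← Finset.sum_add_distrib]
        congr 1; funext pq
        rw [← add_smul]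
        congr 1
        show 2 * (X pq.1 pq.2 + Y pq.1 pq.2) = _
        ring
      map_smul' := by
        intro c X
        rw [Finset.smul_sum]
        congr 1; funext pq
        rw [smul_smul]
        congr 1
        show 2 * (c * X pq.1 pq.2) = c * (2 * X pq.1 pq.2)
        ring }

lemma hasFDerivAt_sqQ (X : Matrix I J ℝ) : HasFDerivAt sqQ (DQ X) X := by
  have h0 : (DQ X : Matrix I J ℝ →L[ℝ] ℝ)
      = ∑ pq : I × J, (2 * X pq.1 pq.2) • evalCLM pq.1 pq.2 := rfl
  rw [h0]
  apply HasFDerivAt.fun_sum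
  intro pq _
  have h := ((evalCLM pq.1 pq.2).hasFDerivAt (x := X)).mul
    ((evalCLM pq.1 pq.2).hasFDerivAt (x := X))
  have e : (fun y : Matrix I J ℝ => y pq.1 pq.2 ^ 2) =
      fun y => evalCLM pq.1 pq.2 y * evalCLM pq.1 pq.2 y := by
    funext y; simp [pow_two]
  rw [e]
  convert h using 1
  simp only [evalCLM_apply]
  rw [two_mul, add_smul]
  exact Iff.rfl

lemma fderiv_sqQ : fderiv ℝ (sqQ (I := I) (J := J)) = ⇑DQ :=
  funext fun X => (hasFDerivAt_sqQ X).fderiv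

lemma DQ_apply (X Y : Matrix I J ℝ) :
    DQ X Y = ∑ pq : I × J, 2 * X pq.1 pq.2 * Y pq.1 pq.2 := by
  have h : DQ X = ∑ pq : I × J, (2 * X pq.1 pq.2) • evalCLM pq.1 pq.2 := rfl
  rw [h]
  simp [ContinuousLinearMap.sum_apply, mul_assoc]

lemma hess_sqQ (X K L : Matrix I J ℝ) : hess sqQ X K L = 2 * fip K L := by
  rw [hess, iteratedFDeriv_two_apply]; erw [fderiv_sqQ, ContinuousLinearMap.fderiv]
  simp only [Matrix.cons_val_zero, Matrix.cons_val_one, Matrix.head_cons]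
  erw [DQ_apply]; rw [fip, Finset.mul_sum]
  congr 1; funext pq; ring

section HessAlg
variable {E F : Type*} [NormedAddCommGroup E] [NormedSpace ℝ E]
  [NormedAddCommGroup F] [NormedSpace ℝ F]

lemma hess_add {f g : E → ℝ} (hf : ContDiff ℝ 2 f) (hg : ContDiff ℝ 2 g) (x v w : E) :
    hess (fun y => f y + g y) x v w = hess f x v w + hess g x v w := by
  unfold hess
  rw [iteratedFDeriv_add_apply' hf.contDiffAt hg.contDiffAt]
  rfl

lemma hess_smul {f : E → ℝ} (c : ℝ) (hf : ContDiff ℝ 2 f) (x v w : E) :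
    hess (fun y => c * f y) x v w = c * hess f x v w := by
  unfold hess
  rw [show (fun y => c * f y) = fun y => c • f y from rfl, iteratedFDeriv_const_smul_apply' hf.contDiffAt]
  rfl

lemma hess_comp (L : E →L[ℝ] F) {f : F → ℝ} (hf : ContDiff ℝ 2 f) (x v w : E) :
    hess (fun y => f (L y)) x v w = hess f (L x) (L v) (L w) := by
  unfold hess
  rw [show (fun y => f (L y)) = f ∘ L from rfl,
    L.iteratedFDeriv_comp_right hf x (le_refl 2),
    ContinuousMultilinearMap.compContinuousLinearMap_apply]
  congr 1
  funext i
  fin_cases i <;> simp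

end HessAlg

-- block continuous linear maps
variable (I J) in
def B11 : Matrix (I ⊕ J) (I ⊕ J) ℝ →L[ℝ] Matrix I I ℝ :=
  LinearMap.toContinuousLinearMap
    { toFun := Matrix.toBlocks₁₁, map_add' := fun _ _ => rfl, map_smul' := fun _ _ => rfl }

variable (I J) in
def B12 : Matrix (I ⊕ J) (I ⊕ J) ℝ →L[ℝ] Matrix I J ℝ :=
  LinearMap.toContinuousLinearMap
    { toFun := Matrix.toBlocks₁₂, map_add' := fun _ _ => rfl, map_smul' := fun _ _ => rfl }

variable (I J) in
def B21 : Matrix (I ⊕ J) (I ⊕ J) ℝ →L[ℝ] Matrix J I ℝ :=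
  LinearMap.toContinuousLinearMap
    { toFun := Matrix.toBlocks₂₁, map_add' := fun _ _ => rfl, map_smul' := fun _ _ => rfl }

variable (I J) in
def B22 : Matrix (I ⊕ J) (I ⊕ J) ℝ →L[ℝ] Matrix J J ℝ :=
  LinearMap.toContinuousLinearMap
    { toFun := Matrix.toBlocks₂₂, map_add' := fun _ _ => rfl, map_smul' := fun _ _ => rfl }

variable (I J) in
def B21T : Matrix (I ⊕ J) (I ⊕ J) ℝ →L[ℝ] Matrix I J ℝ :=
  LinearMap.toContinuousLinearMap
    { toFun := fun N => N.toBlocks₂₁ᵀ, map_add' := fun _ _ => rfl,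
      map_smul' := fun _ _ => rfl }

@[simp] lemma B11_apply (N : Matrix (I ⊕ J) (I ⊕ J) ℝ) : B11 I J N = N.toBlocks₁₁ := rfl
@[simp] lemma B12_apply (N : Matrix (I ⊕ J) (I ⊕ J) ℝ) : B12 I J N = N.toBlocks₁₂ := rfl
@[simp] lemma B21_apply (N : Matrix (I ⊕ J) (I ⊕ J) ℝ) : B21 I J N = N.toBlocks₂₁ := rfl
@[simp] lemma B22_apply (N : Matrix (I ⊕ J) (I ⊕ J) ℝ) : B22 I J N = N.toBlocks₂₂ := rfl
@[simp] lemma B21T_apply (N : Matrix (I ⊕ J) (I ⊕ J) ℝ) : B21T I J N = N.toBlocks₂₁ᵀ := rfl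

/-- Block decomposition of the Frobenius inner product. -/
lemma fip_blocks (K L : Matrix (I ⊕ J) (I ⊕ J) ℝ) :
    fip K L = fip K.toBlocks₁₁ L.toBlocks₁₁ + fip K.toBlocks₁₂ L.toBlocks₁₂ +
      fip K.toBlocks₂₁ L.toBlocks₂₁ + fip K.toBlocks₂₂ L.toBlocks₂₂ := by
  simp only [fip_eq, Fintype.sum_sum_type, Matrix.toBlocks₁₁, Matrix.toBlocks₁₂,
    Matrix.toBlocks₂₁, Matrix.toBlocks₂₂, Matrix.of_apply, Finset.sum_add_distrib]
  ring

lemma sq_norm_blocks (K : Matrix (I ⊕ J) (I ⊕ J) ℝ) :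
    ‖K‖ ^ 2 = ‖K.toBlocks₁₁‖ ^ 2 + ‖K.toBlocks₁₂‖ ^ 2 + ‖K.toBlocks₂₁‖ ^ 2 +
      ‖K.toBlocks₂₂‖ ^ 2 := by
  simp only [sq_norm_eq]
  exact fip_blocks K K

lemma rank_cols_le {k l q' : Type*} [Fintype k] [Fintype l] [Fintype q']
    (A : Matrix k l ℝ) (g' : q' → l) : (A.submatrix id g').rank ≤ A.rank := by
  classical
  have hle : LinearMap.range (A.submatrix id g').mulVecLin ≤ LinearMap.range A.mulVecLin := by
    rintro x ⟨v, rfl⟩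
    refine ⟨fun c => ∑ j, if g' j = c then v j else 0, ?_⟩
    ext i
    simp only [Matrix.mulVecLin_apply, Matrix.mulVec, dotProduct,
      Matrix.submatrix_apply, id_eq, Finset.mul_sum, mul_ite, mul_zero]
    rw [Finset.sum_comm]
    refine Finset.sum_congr rfl fun j _ => ?_
    rw [Finset.sum_ite_eq Finset.univ (g' j) (fun x => A i x * v j)]
    simp
  rw [Matrix.rank, Matrix.rank]
  exact Submodule.finrank_mono hle

lemma rank_rows_le {k l p' : Type*} [Fintype k] [Fintype l] [Fintype p']
    (B : Matrix k l ℝ) (f' : p' → k) : (B.submatrix f' id).rank ≤ B.rank := by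
  rw [← Matrix.rank_transpose (B.submatrix f' id), Matrix.transpose_submatrix,
    ← Matrix.rank_transpose B]
  exact rank_cols_le Bᵀ f'

/-- Rank of an arbitrary submatrix is at most the rank of the matrix. -/
lemma rank_submatrix_le_gen {k l p q : Type*} [Fintype k] [Fintype l] [Fintype p] [Fintype q]
    (A : Matrix k l ℝ) (f : p → k) (g : q → l) :
    (A.submatrix f g).rank ≤ A.rank :=
  calc (A.submatrix f g).rank = ((A.submatrix id g).submatrix f id).rank := by
        rw [Matrix.submatrix_submatrix]; rfl
    _ ≤ (A.submatrix id g).rank := rank_rows_le _ f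
    _ ≤ A.rank := rank_cols_le A g

lemma sq_norm_trace {k l : Type*} [Fintype k] [Fintype l] (A : Matrix k l ℝ) :
    ‖A‖ ^ 2 = Matrix.trace (Aᵀ * A) := by
  rw [sq_norm_eq, fip_eq, Matrix.trace]
  simp only [Matrix.diag_apply, Matrix.mul_apply, Matrix.transpose_apply]
  rw [Finset.sum_comm]

end AuxSect

noncomputable section MainSect

open Matrix

variable {n m : ℕ}

lemma tilF_eq (f : Matrix (Fin n) (Fin m) ℝ → ℝ) (μ : ℝ) :
    tilF f μ = fun N : Matrix (Fin n ⊕ Fin m) (Fin n ⊕ Fin m) ℝ =>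
      f (B12 (Fin n) (Fin m) N) + (f (B21T (Fin n) (Fin m) N) +
      (μ/2 * sqQ (B11 (Fin n) (Fin m) N) + (μ/2 * sqQ (B22 (Fin n) (Fin m) N) +
      (-(μ/2) * sqQ (B12 (Fin n) (Fin m) N) + -(μ/2) * sqQ (B21 (Fin n) (Fin m) N))))) := by
  funext N
  simp only [tilF, B11_apply, B12_apply, B21_apply, B22_apply, B21T_apply, sqQ_eq_norm]
  ring

variable {f : Matrix (Fin n) (Fin m) ℝ → ℝ}

lemma contDiff_tilF (hf : ContDiff ℝ 2 f) (μ : ℝ) : ContDiff ℝ 2 (tilF f μ) := by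
  have c1 : ContDiff ℝ 2 (fun N : Matrix (Fin n ⊕ Fin m) (Fin n ⊕ Fin m) ℝ =>
      f (B12 (Fin n) (Fin m) N)) := hf.comp (by fun_prop)
  have c2 : ContDiff ℝ 2 (fun N : Matrix (Fin n ⊕ Fin m) (Fin n ⊕ Fin m) ℝ =>
      f (B21T (Fin n) (Fin m) N)) := hf.comp (by fun_prop)
  have d11 : ContDiff ℝ 2 (fun N : Matrix (Fin n ⊕ Fin m) (Fin n ⊕ Fin m) ℝ =>
      μ/2 * sqQ (B11 (Fin n) (Fin m) N)) :=
    contDiff_const.mul (contDiff_sqQ.comp (by fun_prop))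
  have d22 : ContDiff ℝ 2 (fun N : Matrix (Fin n ⊕ Fin m) (Fin n ⊕ Fin m) ℝ =>
      μ/2 * sqQ (B22 (Fin n) (Fin m) N)) :=
    contDiff_const.mul (contDiff_sqQ.comp (by fun_prop))
  have d12 : ContDiff ℝ 2 (fun N : Matrix (Fin n ⊕ Fin m) (Fin n ⊕ Fin m) ℝ =>
      -(μ/2) * sqQ (B12 (Fin n) (Fin m) N)) :=
    contDiff_const.mul (contDiff_sqQ.comp (by fun_prop))
  have d21 : ContDiff ℝ 2 (fun N : Matrix (Fin n ⊕ Fin m) (Fin n ⊕ Fin m) ℝ =>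
      -(μ/2) * sqQ (B21 (Fin n) (Fin m) N)) :=
    contDiff_const.mul (contDiff_sqQ.comp (by fun_prop))
  rw [tilF_eq f μ]
  exact c1.add (c2.add (d11.add (d22.add (d12.add d21))))

lemma hess_tilF (hf : ContDiff ℝ 2 f) (μ : ℝ)
    (N K L : Matrix (Fin n ⊕ Fin m) (Fin n ⊕ Fin m) ℝ) :
    hess (tilF f μ) N K L =
      hess f N.toBlocks₁₂ K.toBlocks₁₂ L.toBlocks₁₂ +
      hess f N.toBlocks₂₁ᵀ K.toBlocks₂₁ᵀ L.toBlocks₂₁ᵀ +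
      μ * (fip K.toBlocks₁₁ L.toBlocks₁₁ + fip K.toBlocks₂₂ L.toBlocks₂₂ -
        fip K.toBlocks₁₂ L.toBlocks₁₂ - fip K.toBlocks₂₁ L.toBlocks₂₁) := by
  have c1 : ContDiff ℝ 2 (fun N : Matrix (Fin n ⊕ Fin m) (Fin n ⊕ Fin m) ℝ =>
      f (B12 (Fin n) (Fin m) N)) := hf.comp (by fun_prop)
  have c2 : ContDiff ℝ 2 (fun N : Matrix (Fin n ⊕ Fin m) (Fin n ⊕ Fin m) ℝ =>
      f (B21T (Fin n) (Fin m) N)) := hf.comp (by fun_prop)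
  have q11 : ContDiff ℝ 2 (fun N : Matrix (Fin n ⊕ Fin m) (Fin n ⊕ Fin m) ℝ =>
      sqQ (B11 (Fin n) (Fin m) N)) := contDiff_sqQ.comp (by fun_prop)
  have q22 : ContDiff ℝ 2 (fun N : Matrix (Fin n ⊕ Fin m) (Fin n ⊕ Fin m) ℝ =>
      sqQ (B22 (Fin n) (Fin m) N)) := contDiff_sqQ.comp (by fun_prop)
  have q12 : ContDiff ℝ 2 (fun N : Matrix (Fin n ⊕ Fin m) (Fin n ⊕ Fin m) ℝ =>
      sqQ (B12 (Fin n) (Fin m) N)) := contDiff_sqQ.comp (by fun_prop)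
  have q21 : ContDiff ℝ 2 (fun N : Matrix (Fin n ⊕ Fin m) (Fin n ⊕ Fin m) ℝ =>
      sqQ (B21 (Fin n) (Fin m) N)) := contDiff_sqQ.comp (by fun_prop)
  have d11 := contDiff_const (c := μ/2).mul q11
  have d22 := contDiff_const (c := μ/2).mul q22
  have d12 := contDiff_const (c := -(μ/2)).mul q12
  have d21 := contDiff_const (c := -(μ/2)).mul q21
  rw [tilF_eq f μ]
  rw [hess_add c1 (c2.add (d11.add (d22.add (d12.add d21)))),
    hess_add c2 (d11.add (d22.add (d12.add d21))),
    hess_add d11 (d22.add (d12.add d21)),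
    hess_add d22 (d12.add d21),
    hess_add d12 d21,
    hess_smul (μ/2) q11, hess_smul (μ/2) q22,
    hess_smul (-(μ/2)) q12, hess_smul (-(μ/2)) q21]
  have e1 : hess (fun N => f (B12 (Fin n) (Fin m) N)) N K L = hess f (B12 (Fin n) (Fin m) N) (B12 (Fin n) (Fin m) K) (B12 (Fin n) (Fin m) L) :=
    hess_comp (B12 (Fin n) (Fin m)) hf N K L
  have e2 : hess (fun N => f (B21T (Fin n) (Fin m) N)) N K L = hess f (B21T (Fin n) (Fin m) N) (B21T (Fin n) (Fin m) K) (B21T (Fin n) (Fin m) L) :=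
    hess_comp (B21T (Fin n) (Fin m)) hf N K L
  have e3 : hess (fun N => sqQ (B11 (Fin n) (Fin m) N)) N K L = hess sqQ (B11 (Fin n) (Fin m) N) (B11 (Fin n) (Fin m) K) (B11 (Fin n) (Fin m) L) :=
    hess_comp (B11 (Fin n) (Fin m)) contDiff_sqQ N K L
  have e4 : hess (fun N => sqQ (B22 (Fin n) (Fin m) N)) N K L = hess sqQ (B22 (Fin n) (Fin m) N) (B22 (Fin n) (Fin m) K) (B22 (Fin n) (Fin m) L) :=
    hess_comp (B22 (Fin n) (Fin m)) contDiff_sqQ N K L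
  have e5 : hess (fun N => sqQ (B12 (Fin n) (Fin m) N)) N K L = hess sqQ (B12 (Fin n) (Fin m) N) (B12 (Fin n) (Fin m) K) (B12 (Fin n) (Fin m) L) :=
    hess_comp (B12 (Fin n) (Fin m)) contDiff_sqQ N K L
  have e6 : hess (fun N => sqQ (B21 (Fin n) (Fin m) N)) N K L = hess sqQ (B21 (Fin n) (Fin m) N) (B21 (Fin n) (Fin m) K) (B21 (Fin n) (Fin m) L) :=
    hess_comp (B21 (Fin n) (Fin m)) contDiff_sqQ N K L
  rw [e1, e2, e3, e4, e5, e6, hess_sqQ, hess_sqQ, hess_sqQ, hess_sqQ]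
  simp only [B11_apply, B12_apply, B21_apply, B22_apply, B21T_apply]
  ring

end MainSect

open Matrix in
lemma key_norm_id {n m r : ℕ} (U : Matrix (Fin n) (Fin r) ℝ) (V : Matrix (Fin m) (Fin r) ℝ) :
    ‖U * Uᵀ‖ ^ 2 + ‖V * Vᵀ‖ ^ 2 - 2 * ‖U * Vᵀ‖ ^ 2 = ‖Uᵀ * U - Vᵀ * V‖ ^ 2 := by
  rw [sq_norm_trace, sq_norm_trace, sq_norm_trace, sq_norm_trace]
  simp only [Matrix.transpose_mul, Matrix.transpose_transpose, Matrix.transpose_sub,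
    Matrix.sub_mul, Matrix.mul_sub, Matrix.trace_sub]
  have c1 : trace (U * Uᵀ * (U * Uᵀ)) = trace (Uᵀ * U * (Uᵀ * U)) := by
    rw [Matrix.mul_assoc, Matrix.trace_mul_comm]
    simp only [Matrix.mul_assoc]
  have c2 : trace (V * Vᵀ * (V * Vᵀ)) = trace (Vᵀ * V * (Vᵀ * V)) := by
    rw [Matrix.mul_assoc, Matrix.trace_mul_comm]
    simp only [Matrix.mul_assoc]
  have c3 : trace (V * Uᵀ * (U * Vᵀ)) = trace (Uᵀ * U * (Vᵀ * V)) := by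
    rw [Matrix.mul_assoc, Matrix.trace_mul_comm]
    simp only [Matrix.mul_assoc]
  have c4 : trace (Vᵀ * V * (Uᵀ * U)) = trace (Uᵀ * U * (Vᵀ * V)) := Matrix.trace_mul_comm _ _
  linarith

lemma cs_two {x1 x2 y1 y2 X Y : ℝ} (hx1 : 0 ≤ x1) (hx2 : 0 ≤ x2) (hy1 : 0 ≤ y1) (hy2 : 0 ≤ y2)
    (hX : 0 ≤ X) (hY : 0 ≤ Y) (h1 : x1 ^ 2 + x2 ^ 2 ≤ X ^ 2) (h2 : y1 ^ 2 + y2 ^ 2 ≤ Y ^ 2) :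
    x1 * y1 + x2 * y2 ≤ X * Y := by
  have hs : (x1 * y1 + x2 * y2) ^ 2 ≤ X ^ 2 * Y ^ 2 := by
    nlinarith [sq_nonneg (x1 * y2 - x2 * y1), sq_nonneg y1, sq_nonneg y2, sq_nonneg X]
  nlinarith [mul_nonneg hX hY, add_nonneg (mul_nonneg hx1 hy1) (mul_nonneg hx2 hy2)]


set_option maxHeartbeats 1600000 in
/-- Transformation of an asymmetric problem with `δ`-RIP₂ᵣ,₂ₛ and `κ`-BDP₂ₜ into an
equivalent symmetric problem with `2δ/(1+δ)`-RIP₂ᵣ,₂ₛ and `2κ/(1+δ)`-BDP₂ₜ, using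
`μ = (1-δ)/2`. -/
theorem statement16 (n m r s t : ℕ) (δ κ : ℝ) (hδ0 : 0 ≤ δ) (hδ1 : δ < 1) (hκ : 0 ≤ κ)
    (f : Matrix (Fin n) (Fin m) ℝ → ℝ) (hf : ContDiff ℝ 2 f)
    (hrip : RIP r s δ f) (hbdp : BDP t κ f) :
    (∀ (U : Matrix (Fin n) (Fin r) ℝ) (V : Matrix (Fin m) (Fin r) ℝ),
      tilF f ((1 - δ) / 2) (Matrix.fromRows U V * (Matrix.fromRows U V)ᵀ) =
        2 * (f (U * Vᵀ) + (1 - δ) / 2 / 4 * ‖Uᵀ * U - Vᵀ * V‖ ^ 2)) ∧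
    RIP r s (2 * δ / (1 + δ)) (fun N => 2 / (1 + δ) * tilF f ((1 - δ) / 2) N) ∧
    BDP t (2 * κ / (1 + δ)) (fun N => 2 / (1 + δ) * tilF f ((1 - δ) / 2) N) := by
  have hd : (0 : ℝ) < 1 + δ := by linarith
  have hc : (0 : ℝ) ≤ 2 / (1 + δ) := by positivity
  -- Hessian of the scaled lift
  have hG : ∀ N K L : Matrix (Fin n ⊕ Fin m) (Fin n ⊕ Fin m) ℝ,
      hess (fun N => 2 / (1 + δ) * tilF f ((1 - δ) / 2) N) N K L =
        2 / (1 + δ) * (hess f N.toBlocks₁₂ K.toBlocks₁₂ L.toBlocks₁₂ +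
          hess f N.toBlocks₂₁ᵀ K.toBlocks₂₁ᵀ L.toBlocks₂₁ᵀ +
          (1 - δ) / 2 * (fip K.toBlocks₁₁ L.toBlocks₁₁ + fip K.toBlocks₂₂ L.toBlocks₂₂ -
            fip K.toBlocks₁₂ L.toBlocks₁₂ - fip K.toBlocks₂₁ L.toBlocks₂₁)) := by
    intro N K L
    rw [hess_smul (2 / (1 + δ)) (contDiff_tilF hf ((1 - δ) / 2)), hess_tilF hf]
  -- rank facts
  have rk12 : ∀ (N : Matrix (Fin n ⊕ Fin m) (Fin n ⊕ Fin m) ℝ), N.toBlocks₁₂.rank ≤ N.rank :=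
    fun N => rank_submatrix_le_gen N Sum.inl Sum.inr
  have rk21T : ∀ (N : Matrix (Fin n ⊕ Fin m) (Fin n ⊕ Fin m) ℝ), N.toBlocks₂₁ᵀ.rank ≤ N.rank :=
    fun N => by
      rw [Matrix.rank_transpose]
      exact rank_submatrix_le_gen N Sum.inr Sum.inl
  refine ⟨?_, ?_, ?_⟩
  · -- part (i)
    intro U V
    rw [Matrix.transpose_fromRows, Matrix.fromRows_mul_fromCols]
    unfold tilF
    simp only [Matrix.toBlocks_fromBlocks₁₁, Matrix.toBlocks_fromBlocks₁₂,
      Matrix.toBlocks_fromBlocks₂₁, Matrix.toBlocks_fromBlocks₂₂]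
    rw [show (V * Uᵀ)ᵀ = U * Vᵀ by simp]
    have hT : ‖V * Uᵀ‖ = ‖U * Vᵀ‖ := by
      rw [show V * Uᵀ = (U * Vᵀ)ᵀ by simp, Matrix.frobenius_norm_transpose]
    rw [hT]
    have hkey := key_norm_id U V
    linear_combination ((1 - δ) / 4) * hkey
  · -- part (ii) : RIP
    intro M K hM hK
    rw [hG M]
    have l1 := (hrip M.toBlocks₁₂ K.toBlocks₁₂ (le_trans (rk12 M) hM) (le_trans (rk12 K) hK)).1
    have u1 := (hrip M.toBlocks₁₂ K.toBlocks₁₂ (le_trans (rk12 M) hM) (le_trans (rk12 K) hK)).2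
    have l2 := (hrip M.toBlocks₂₁ᵀ K.toBlocks₂₁ᵀ (le_trans (rk21T M) hM)
      (le_trans (rk21T K) hK)).1
    have u2 := (hrip M.toBlocks₂₁ᵀ K.toBlocks₂₁ᵀ (le_trans (rk21T M) hM)
      (le_trans (rk21T K) hK)).2
    rw [Matrix.frobenius_norm_transpose] at l2 u2
    have hbl := sq_norm_blocks K
    have e11 : fip K.toBlocks₁₁ K.toBlocks₁₁ = ‖K.toBlocks₁₁‖ ^ 2 := (sq_norm_eq _).symm
    have e12 : fip K.toBlocks₁₂ K.toBlocks₁₂ = ‖K.toBlocks₁₂‖ ^ 2 := (sq_norm_eq _).symm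
    have e21 : fip K.toBlocks₂₁ K.toBlocks₂₁ = ‖K.toBlocks₂₁‖ ^ 2 := (sq_norm_eq _).symm
    have e22 : fip K.toBlocks₂₂ K.toBlocks₂₂ = ‖K.toBlocks₂₂‖ ^ 2 := (sq_norm_eq _).symm
    rw [e11, e12, e21, e22]
    set a := ‖K.toBlocks₁₁‖ ^ 2
    set b := ‖K.toBlocks₁₂‖ ^ 2
    set c := ‖K.toBlocks₂₁‖ ^ 2
    set d := ‖K.toBlocks₂₂‖ ^ 2
    set A := hess f M.toBlocks₁₂ K.toBlocks₁₂ K.toBlocks₁₂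
    set B := hess f M.toBlocks₂₁ᵀ K.toBlocks₂₁ᵀ K.toBlocks₂₁ᵀ
    have ha' : 0 ≤ a := sq_nonneg _
    have hb' : 0 ≤ b := sq_nonneg _
    have hc' : 0 ≤ c := sq_nonneg _
    have hd' : 0 ≤ d := sq_nonneg _
    constructor
    · have core : (1 - δ) * ‖K‖ ^ 2 ≤ 2 * (A + B + (1 - δ) / 2 * (a + d - b - c)) := by
        rw [hbl]; nlinarith [l1, l2]
      have hco : 1 - 2 * δ / (1 + δ) = (1 - δ) / (1 + δ) := by
        field_simp; ring
      calc (1 - 2 * δ / (1 + δ)) * ‖K‖ ^ 2 = ((1 - δ) * ‖K‖ ^ 2) / (1 + δ) := by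
            rw [hco]; ring
        _ ≤ (2 * (A + B + (1 - δ) / 2 * (a + d - b - c))) / (1 + δ) := by
            exact div_le_div_of_nonneg_right core hd.le
        _ = 2 / (1 + δ) * (A + B + (1 - δ) / 2 * (a + d - b - c)) := by ring
    · have core : 2 * (A + B + (1 - δ) / 2 * (a + d - b - c)) ≤ (1 + 3 * δ) * ‖K‖ ^ 2 := by
        rw [hbl]; nlinarith [u1, u2]
      calc 2 / (1 + δ) * (A + B + (1 - δ) / 2 * (a + d - b - c))
          = (2 * (A + B + (1 - δ) / 2 * (a + d - b - c))) / (1 + δ) := by ring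
        _ ≤ ((1 + 3 * δ) * ‖K‖ ^ 2) / (1 + δ) := by
            exact div_le_div_of_nonneg_right core hd.le
        _ ≤ (1 + 2 * δ / (1 + δ)) * ‖K‖ ^ 2 := by
            have hco : 1 + 2 * δ / (1 + δ) = (1 + 3 * δ) / (1 + δ) := by
              field_simp; ring
            rw [hco, div_mul_eq_mul_div]
  · -- part (iii) : BDP
    intro M M' K L hM hM' hK hL
    rw [hG M, hG M']
    set A := hess f M.toBlocks₁₂ K.toBlocks₁₂ L.toBlocks₁₂
    set B := hess f M.toBlocks₂₁ᵀ K.toBlocks₂₁ᵀ L.toBlocks₂₁ᵀ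
    set A' := hess f M'.toBlocks₁₂ K.toBlocks₁₂ L.toBlocks₁₂
    set B' := hess f M'.toBlocks₂₁ᵀ K.toBlocks₂₁ᵀ L.toBlocks₂₁ᵀ
    set T := fip K.toBlocks₁₁ L.toBlocks₁₁ + fip K.toBlocks₂₂ L.toBlocks₂₂ -
      fip K.toBlocks₁₂ L.toBlocks₁₂ - fip K.toBlocks₂₁ L.toBlocks₂₁
    have hrw : 2 / (1 + δ) * (A + B + (1 - δ) / 2 * T) -
        2 / (1 + δ) * (A' + B' + (1 - δ) / 2 * T) = 2 / (1 + δ) * ((A - A') + (B - B')) := by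
      ring
    rw [hrw, abs_mul, abs_of_nonneg hc]
    have b1 := hbdp M.toBlocks₁₂ M'.toBlocks₁₂ K.toBlocks₁₂ L.toBlocks₁₂
      (le_trans (rk12 M) hM) (le_trans (rk12 M') hM') (le_trans (rk12 K) hK)
      (le_trans (rk12 L) hL)
    have b2 := hbdp M.toBlocks₂₁ᵀ M'.toBlocks₂₁ᵀ K.toBlocks₂₁ᵀ L.toBlocks₂₁ᵀ
      (le_trans (rk21T M) hM) (le_trans (rk21T M') hM') (le_trans (rk21T K) hK)
      (le_trans (rk21T L) hL)
    rw [Matrix.frobenius_norm_transpose, Matrix.frobenius_norm_transpose] at b2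
    have hcs : κ * ‖K.toBlocks₁₂‖ * ‖L.toBlocks₁₂‖ + κ * ‖K.toBlocks₂₁‖ * ‖L.toBlocks₂₁‖ ≤
        κ * (‖K‖ * ‖L‖) := by
      have hK2 : ‖K.toBlocks₁₂‖ ^ 2 + ‖K.toBlocks₂₁‖ ^ 2 ≤ ‖K‖ ^ 2 := by
        have := sq_norm_blocks K
        nlinarith [sq_nonneg ‖K.toBlocks₁₁‖, sq_nonneg ‖K.toBlocks₂₂‖]
      have hL2 : ‖L.toBlocks₁₂‖ ^ 2 + ‖L.toBlocks₂₁‖ ^ 2 ≤ ‖L‖ ^ 2 := by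
        have := sq_norm_blocks L
        nlinarith [sq_nonneg ‖L.toBlocks₁₁‖, sq_nonneg ‖L.toBlocks₂₂‖]
      have := cs_two (norm_nonneg K.toBlocks₁₂) (norm_nonneg K.toBlocks₂₁)
        (norm_nonneg L.toBlocks₁₂) (norm_nonneg L.toBlocks₂₁) (norm_nonneg K) (norm_nonneg L)
        hK2 hL2
      nlinarith [this]
    calc 2 / (1 + δ) * |(A - A') + (B - B')| ≤ 2 / (1 + δ) * (|A - A'| + |B - B'|) := by
          apply mul_le_mul_of_nonneg_left (abs_add_le _ _) hc
      _ ≤ 2 / (1 + δ) * (κ * ‖K.toBlocks₁₂‖ * ‖L.toBlocks₁₂‖ +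
            κ * ‖K.toBlocks₂₁‖ * ‖L.toBlocks₂₁‖) := by
          apply mul_le_mul_of_nonneg_left (add_le_add b1 b2) hc
      _ ≤ 2 / (1 + δ) * (κ * (‖K‖ * ‖L‖)) := mul_le_mul_of_nonneg_left hcs hc
      _ = 2 * κ / (1 + δ) * ‖K‖ * ‖L‖ := by ring
end

section
/- Let f_a : ℝ^{n×m} → ℝ be twice continuously differentiable, μ > 0, and ρ(U,V) := f_a(UVᵀ) + (μ/4)‖UᵀU − VᵀV‖_F² for U ∈ ℝ^{n×r}, V ∈ ℝ^{m×r}. Given a constant ε > 0, if ‖UᵀU − VᵀV‖_F ≥ ε, then the gradient of ρ at (U,V) satisfies ‖∇ρ(U,V)‖_F ≥ μ·(ε/r)^{3/2}. -/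
open Matrix

attribute [local instance] Matrix.frobeniusSeminormedAddCommGroup
  Matrix.frobeniusNormedAddCommGroup Matrix.frobeniusNormedSpace

/-- Objective of the regularized asymmetric problem (5), written on the stacked
variable `W = (U; V)`. -/
noncomputable def rhoW {n m r : ℕ} (f : Matrix (Fin n) (Fin m) ℝ → ℝ) (μ : ℝ)
    (W : Matrix (Fin n ⊕ Fin m) (Fin r) ℝ) : ℝ :=
  f (W.toRows₁ * W.toRows₂ᵀ) + μ / 4 * ‖W.toRows₁ᵀ * W.toRows₁ - W.toRows₂ᵀ * W.toRows₂‖ ^ 2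

/-- The `(α, β, γ)`-strict saddle property for a function on a matrix space,
with the Frobenius distance to the set of global minimizers. -/
def StrictSaddleMat {I J : Type*} [Fintype I] [Fintype J] [DecidableEq I] [DecidableEq J]
    (F : Matrix I J ℝ → ℝ) (α β γ : ℝ) : Prop :=
  ∀ x : Matrix I J ℝ,
    Metric.infDist x {y : Matrix I J ℝ | ∀ z, F y ≤ F z} ≤ α ∨
    β ≤ ‖mgrad F x‖ ∨
    ∃ v : Matrix I J ℝ, ‖v‖ = 1 ∧ hess F x v v ≤ -γ

section auxiliaries

set_option linter.unusedSectionVars false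

variable {I J : Type*} [Fintype I] [Fintype J]

private lemma norm_sq_eq (X : Matrix I J ℝ) : ‖X‖ ^ 2 = ∑ i, ∑ j, X i j ^ 2 := by
  rw [Matrix.frobenius_norm_def, ← Real.rpow_natCast _ 2, ← Real.rpow_mul (by positivity)]
  norm_num

private lemma minner_eq_sum (X Y : Matrix I J ℝ) :
    minner X Y = ∑ i, ∑ j, X i j * Y i j := by
  simp only [minner, Matrix.trace, Matrix.diag, Matrix.mul_apply, Matrix.transpose_apply]
  exact Finset.sum_comm

private lemma sum_sq_eq_trace (X : Matrix I J ℝ) :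
    (∑ i, ∑ j, X i j ^ 2) = Matrix.trace (Xᵀ * X) := by
  have e : ∑ i, ∑ j, X i j ^ 2 = ∑ i, ∑ j, X i j * X i j :=
    Finset.sum_congr rfl fun i _ => Finset.sum_congr rfl fun j _ => sq (X i j)
  rw [e, ← minner_eq_sum]
  rfl

private lemma minner_self (X : Matrix I J ℝ) : minner X X = ‖X‖ ^ 2 := by
  rw [minner_eq_sum, norm_sq_eq]
  exact Finset.sum_congr rfl fun i _ => Finset.sum_congr rfl fun j _ => (sq (X i j)).symm

private lemma abs_minner_le (X Y : Matrix I J ℝ) : |minner X Y| ≤ ‖X‖ * ‖Y‖ := by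
  have h1 : minner X Y ^ 2 ≤ (‖X‖ * ‖Y‖) ^ 2 := by
    rw [mul_pow, norm_sq_eq, norm_sq_eq, minner_eq_sum]
    have h := Finset.sum_mul_sq_le_sq_mul_sq (Finset.univ ×ˢ Finset.univ)
      (fun p : I × J => X p.1 p.2) (fun p : I × J => Y p.1 p.2)
    rw [Finset.sum_product, Finset.sum_product, Finset.sum_product] at h
    exact h
  calc |minner X Y| = Real.sqrt (minner X Y ^ 2) := (Real.sqrt_sq_eq_abs _).symm
    _ ≤ Real.sqrt ((‖X‖ * ‖Y‖) ^ 2) := Real.sqrt_le_sqrt h1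
    _ = ‖X‖ * ‖Y‖ := Real.sqrt_sq (by positivity)

variable [DecidableEq I] [DecidableEq J]

private lemma minner_mgrad_eq (F : Matrix I J ℝ → ℝ) (W Δ : Matrix I J ℝ) :
    minner (mgrad F W) Δ = fderiv ℝ F W Δ := by
  conv_rhs => rw [matrix_eq_sum_single Δ]
  rw [map_sum, minner_eq_sum]
  refine Finset.sum_congr rfl fun i _ => ?_
  rw [map_sum]
  refine Finset.sum_congr rfl fun j _ => ?_
  have : Matrix.single i j (Δ i j) = (Δ i j) • Matrix.single i j 1 := by
    rw [Matrix.smul_single, smul_eq_mul, mul_one]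
  rw [this, _root_.map_smul]
  simp [mgrad, mul_comm]

private lemma fderiv_eq_curve {F : Matrix I J ℝ → ℝ} {W Δ : Matrix I J ℝ} {c : ℝ}
    (hF : DifferentiableAt ℝ F W)
    (hc : HasDerivAt (fun t : ℝ => F (W + t • Δ)) c 0) :
    fderiv ℝ F W Δ = c := by
  have hline : HasDerivAt (fun t : ℝ => W + t • Δ) Δ 0 := by
    exact (((hasDerivAt_id (0:ℝ)).smul_const Δ).const_add W).congr_deriv (one_smul ℝ Δ)
  have h2 : HasDerivAt (fun t : ℝ => F (W + t • Δ)) (fderiv ℝ F W Δ) 0 := by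
    have hF' : HasFDerivAt F (fderiv ℝ F W) (W + (0:ℝ) • Δ) := by simpa using hF.hasFDerivAt
    have := hF'.comp_hasDerivAt 0 hline
    exact this
  exact h2.unique hc

end auxiliaries

section clm

variable (a b c : Type*) [Fintype a] [Fintype b] [Fintype c]

private lemma isBoundedBilinearMap_matmul :
    IsBoundedBilinearMap ℝ (fun p : Matrix a b ℝ × Matrix b c ℝ => p.1 * p.2) where
  add_left x₁ x₂ y := Matrix.add_mul x₁ x₂ y
  smul_left c x y := Matrix.smul_mul c x y
  add_right x y₁ y₂ := Matrix.mul_add x y₁ y₂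
  smul_right c x y := Matrix.mul_smul x c y
  bound := ⟨1, one_pos, fun x y => by
    simpa using Matrix.frobenius_norm_mul x y⟩

private lemma isBoundedBilinearMap_minner :
    IsBoundedBilinearMap ℝ (fun p : Matrix a b ℝ × Matrix a b ℝ => minner p.1 p.2) where
  add_left x₁ x₂ y := by simp [minner, Matrix.transpose_add, Matrix.add_mul, Matrix.trace_add]
  smul_left c x y := by simp [minner, Matrix.transpose_smul, Matrix.smul_mul]
  add_right x y₁ y₂ := by simp [minner, Matrix.mul_add, Matrix.trace_add]
  smul_right c x y := by simp [minner, Matrix.mul_smul]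
  bound := ⟨1, one_pos, fun x y => by
    simpa using abs_minner_le x y⟩

private noncomputable def transposeCLM : Matrix a b ℝ →L[ℝ] Matrix b a ℝ :=
  LinearMap.toContinuousLinearMap (Matrix.transposeLinearEquiv a b ℝ ℝ).toLinearMap

@[simp] private lemma transposeCLM_apply (X : Matrix a b ℝ) : transposeCLM a b X = Xᵀ := rfl

private noncomputable def toRows₁CLM : Matrix (a ⊕ b) c ℝ →L[ℝ] Matrix a c ℝ :=
  LinearMap.toContinuousLinearMap
    { toFun := Matrix.toRows₁
      map_add' := fun _ _ => rfl
      map_smul' := fun _ _ => rfl }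

@[simp] private lemma toRows₁CLM_apply (X : Matrix (a ⊕ b) c ℝ) :
    toRows₁CLM a b c X = X.toRows₁ := rfl

private noncomputable def toRows₂CLM : Matrix (a ⊕ b) c ℝ →L[ℝ] Matrix b c ℝ :=
  LinearMap.toContinuousLinearMap
    { toFun := Matrix.toRows₂
      map_add' := fun _ _ => rfl
      map_smul' := fun _ _ => rfl }

@[simp] private lemma toRows₂CLM_apply (X : Matrix (a ⊕ b) c ℝ) :
    toRows₂CLM a b c X = X.toRows₂ := rfl

end clm

section traces

set_option linter.unusedSectionVars false

variable {R : Type*} [Fintype R] [DecidableEq R]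

private lemma trace_mul_vecMulVec (A : Matrix R R ℝ) (v w : R → ℝ) :
    Matrix.trace (A * Matrix.vecMulVec v w) = w ⬝ᵥ (A *ᵥ v) := by
  simp only [Matrix.trace, Matrix.diag, Matrix.mul_apply, Matrix.vecMulVec_apply,
    Matrix.mulVec, dotProduct, Finset.mul_sum]
  exact Finset.sum_congr rfl fun i _ => Finset.sum_congr rfl fun j _ => by ring

private lemma vecMulVec_mul_vecMulVec (v w x y : R → ℝ) :
    Matrix.vecMulVec v w * Matrix.vecMulVec x y = (w ⬝ᵥ x) • Matrix.vecMulVec v y := by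
  ext i k
  simp only [Matrix.mul_apply, Matrix.vecMulVec_apply, Matrix.smul_apply, dotProduct,
    smul_eq_mul, Finset.sum_mul, Finset.mul_sum]
  refine Finset.sum_congr rfl fun j _ => by ring

private lemma trace_sq_eq_sum_eig (E : Matrix R R ℝ) (hE : E.IsHermitian) :
    Matrix.trace (E * E) = ∑ i, hE.eigenvalues i ^ 2 := by
  set Q : Matrix R R ℝ := (hE.eigenvectorUnitary : Matrix R R ℝ) with hQdef
  have h1 : star Q * Q = 1 := Matrix.mem_unitaryGroup_iff'.mp hE.eigenvectorUnitary.2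
  have hof : (RCLike.ofReal ∘ hE.eigenvalues : R → ℝ) = hE.eigenvalues := by
    funext i; simp [RCLike.ofReal_real_eq_id]
  have h := hE.spectral_theorem
  rw [hof] at h
  rw [Unitary.conjStarAlgAut_apply, ← hQdef] at h
  set Dg : Matrix R R ℝ := Matrix.diagonal hE.eigenvalues with hDg
  conv_lhs => rw [h]
  have e1 : Q * Dg * star Q * (Q * Dg * star Q) = Q * (Dg * Dg) * star Q := by
    calc Q * Dg * star Q * (Q * Dg * star Q)
        = Q * Dg * (star Q * Q) * (Dg * star Q) := by simp only [Matrix.mul_assoc]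
      _ = Q * (Dg * Dg) * star Q := by rw [h1]; simp only [Matrix.mul_one, Matrix.mul_assoc]
  rw [e1, Matrix.trace_mul_cycle, ← Matrix.mul_assoc, h1, Matrix.one_mul]
  simp [hDg, Matrix.diagonal_mul_diagonal, Matrix.trace_diagonal, sq]

end traces

section curves

set_option linter.unusedSectionVars false

variable {N M R : Type*} [Fintype N] [Fintype M] [Fintype R]

private lemma curve_eq (U : Matrix N R ℝ) (V : Matrix M R ℝ) (D : Matrix R R ℝ)
    (hD : Dᵀ = D) (t : ℝ) :
    (U + t • (U*D))ᵀ * (U + t • (U*D)) - (V + t • (-(V*D)))ᵀ * (V + t • (-(V*D)))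
      = (Uᵀ*U - Vᵀ*V) + t • (D*(Uᵀ*U + Vᵀ*V) + (Uᵀ*U + Vᵀ*V)*D)
        + (t^2) • (D*(Uᵀ*U - Vᵀ*V)*D) := by
  simp only [Matrix.transpose_add, Matrix.transpose_smul, Matrix.transpose_mul,
    Matrix.transpose_neg, Matrix.neg_mul, Matrix.mul_neg, hD, Matrix.add_mul, Matrix.mul_add,
    Matrix.smul_mul, Matrix.mul_smul, Matrix.mul_assoc, smul_smul, smul_neg,
    Matrix.sub_mul, Matrix.mul_sub, sq]
  module

private lemma curve_eq2 (U : Matrix N R ℝ) (V : Matrix M R ℝ) (D : Matrix R R ℝ)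
    (hD : Dᵀ = D) (t : ℝ) :
    (U + t • (U*D)) * (V + t • (-(V*D)))ᵀ = U*Vᵀ - (t^2) • (U*(D*(D*Vᵀ))) := by
  simp only [Matrix.transpose_add, Matrix.transpose_smul, Matrix.transpose_mul,
    Matrix.transpose_neg, Matrix.neg_mul, Matrix.mul_neg, hD, Matrix.add_mul, Matrix.mul_add,
    Matrix.smul_mul, Matrix.mul_smul, Matrix.mul_assoc, smul_smul, smul_neg, sq]
  module

end curves

set_option maxHeartbeats 1000000 in
/-- If the balancing residual `‖UᵀU − VᵀV‖_F` is at least `ε`, then the gradient of the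
regularized objective `ρ` is at least `μ(ε/r)^{3/2}` in Frobenius norm. -/
theorem statement18 (n m r : ℕ) (μ ε : ℝ)
    (f : Matrix (Fin n) (Fin m) ℝ → ℝ) (hf : ContDiff ℝ 2 f)
    (hμ : 0 < μ) (hε : 0 < ε)
    (W : Matrix (Fin n ⊕ Fin m) (Fin r) ℝ)
    (h : ε ≤ ‖W.toRows₁ᵀ * W.toRows₁ - W.toRows₂ᵀ * W.toRows₂‖) :
    μ * (ε / r) ^ ((3 : ℝ) / 2) ≤ ‖mgrad (rhoW f μ) W‖ := by
  classical
  rcases Nat.eq_zero_or_pos r with hr0 | hrpos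
  · exfalso
    subst hr0
    have h0 : ‖W.toRows₁ᵀ * W.toRows₁ - W.toRows₂ᵀ * W.toRows₂‖ ^ 2 = 0 := by
      rw [norm_sq_eq]; simp
    nlinarith [h, hε]
  have hNe : Nonempty (Fin r) := ⟨⟨0, hrpos⟩⟩
  set U := W.toRows₁ with hU
  set V := W.toRows₂ with hV
  set E := Uᵀ * U - Vᵀ * V with hEdef
  have hEt : Eᵀ = E := by
    rw [hEdef]
    simp [Matrix.transpose_sub, Matrix.transpose_mul]
  have hE : E.IsHermitian := by
    show Eᴴ = E
    ext i j
    simp only [Matrix.conjTranspose_apply, star_trivial]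
    exact congrFun (congrFun hEt i) j
  obtain ⟨i0, hi0⟩ := Finite.exists_max (fun i => hE.eigenvalues i ^ 2)
  set lam := hE.eigenvalues i0 with hlamdef
  set v : Fin r → ℝ := ⇑(hE.eigenvectorBasis i0) with hvdef
  have hEv : E *ᵥ v = lam • v := hE.mulVec_eigenvectorBasis i0
  have hv1 : v ⬝ᵥ v = 1 := by
    have hn : ‖hE.eigenvectorBasis i0‖ = 1 := hE.eigenvectorBasis.orthonormal.1 i0
    have h2 := EuclideanSpace.norm_eq (hE.eigenvectorBasis i0)
    rw [hn] at h2
    have h3 := Real.sqrt_eq_one.mp h2.symm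
    rw [dotProduct]
    calc ∑ i, v i * v i = ∑ i, ‖(hE.eigenvectorBasis i0) i‖ ^ 2 := by
          refine Finset.sum_congr rfl fun i _ => ?_
          rw [Real.norm_eq_abs, sq_abs, sq]
      _ = 1 := h3
  -- eigenvalue lower bound
  have hnormE : ‖E‖ ^ 2 = ∑ i, hE.eigenvalues i ^ 2 := by
    rw [← minner_self E]
    have : minner E E = Matrix.trace (E * E) := by
      show Matrix.trace (Eᵀ * E) = _
      rw [hEt]
    rw [this, trace_sq_eq_sum_eig E hE]
  have hεr : ε ^ 2 ≤ r * lam ^ 2 := by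
    calc ε ^ 2 ≤ ‖E‖ ^ 2 := pow_le_pow_left₀ hε.le h 2
      _ = ∑ i, hE.eigenvalues i ^ 2 := hnormE
      _ ≤ ∑ _i : Fin r, lam ^ 2 := Finset.sum_le_sum fun i _ => hi0 i
      _ = r * lam ^ 2 := by
          simp [Finset.sum_const, Finset.card_univ, nsmul_eq_mul]
  have hlam_ne : lam ≠ 0 := by
    intro h0
    rw [h0] at hεr
    simp at hεr
    nlinarith
  have hlam_pos : 0 < |lam| := abs_pos.mpr hlam_ne
  have hεrlam : ε / r ≤ |lam| := by
    rw [div_le_iff₀ (by positivity : (0:ℝ) < (r:ℝ))]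
    have hr1 : (1:ℝ) ≤ (r:ℝ) := by exact_mod_cast hrpos
    have hBpos : 0 < |lam| * r := mul_pos hlam_pos (by positivity)
    have hkey : r * lam ^ 2 ≤ (|lam| * r) ^ 2 := by
      have h2 : (|lam| * r) ^ 2 = lam ^ 2 * r ^ 2 := by rw [mul_pow, sq_abs]
      nlinarith [hr1, sq_nonneg lam]
    nlinarith [hεr, hkey, hε, hBpos]
  -- the direction
  set S := Uᵀ * U + Vᵀ * V with hSdef
  set D := Matrix.vecMulVec v v with hDdef
  have hDt : Dᵀ = D := by
    ext i j
    simp [hDdef, Matrix.transpose_apply, Matrix.vecMulVec_apply, mul_comm]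
  set P := D * S + S * D with hPdef
  set Qm := D * E * D with hQdef
  set Δ := Matrix.fromRows (U * D) (-(V * D)) with hΔdef
  -- quadratic form facts
  have hUq : v ⬝ᵥ ((Uᵀ*U) *ᵥ v) = (U *ᵥ v) ⬝ᵥ (U *ᵥ v) := by
    rw [← Matrix.mulVec_mulVec, Matrix.dotProduct_mulVec, Matrix.vecMul_transpose]
  have hVq : v ⬝ᵥ ((Vᵀ*V) *ᵥ v) = (V *ᵥ v) ⬝ᵥ (V *ᵥ v) := by
    rw [← Matrix.mulVec_mulVec, Matrix.dotProduct_mulVec, Matrix.vecMul_transpose]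
  set α := (U *ᵥ v) ⬝ᵥ (U *ᵥ v) with hαdef
  set β := (V *ᵥ v) ⬝ᵥ (V *ᵥ v) with hβdef
  have hα : 0 ≤ α := by
    rw [hαdef, dotProduct]
    exact Finset.sum_nonneg fun i _ => mul_self_nonneg _
  have hβ : 0 ≤ β := by
    rw [hβdef, dotProduct]
    exact Finset.sum_nonneg fun i _ => mul_self_nonneg _
  set s := v ⬝ᵥ (S *ᵥ v) with hsdef
  have hs_split : s = α + β := by
    rw [hsdef, hSdef, Matrix.add_mulVec, dotProduct_add, hUq, hVq]
  have hlamEq : v ⬝ᵥ (E *ᵥ v) = lam := by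
    rw [hEv, dotProduct_smul, smul_eq_mul, hv1, mul_one]
  have hlam_split : lam = α - β := by
    rw [← hlamEq, hEdef, Matrix.sub_mulVec, dotProduct_sub, hUq, hVq]
  have habs : |lam| ≤ s := by
    rw [hlam_split, hs_split, abs_le]
    constructor <;> linarith
  have hs_pos : 0 < s := lt_of_lt_of_le hlam_pos habs
  -- trace computations
  have hEvec : v ᵥ* E = lam • v := by
    rw [← hEt, Matrix.vecMul_transpose, hEv]
  have t1 : Matrix.trace (E * (D * S)) = lam * s := by
    rw [← Matrix.mul_assoc, Matrix.trace_mul_cycle, hDdef, trace_mul_vecMulVec,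
      ← Matrix.mulVec_mulVec, hEv, Matrix.mulVec_smul, dotProduct_smul, smul_eq_mul, hsdef]
  have t2 : Matrix.trace (E * (S * D)) = lam * s := by
    rw [← Matrix.mul_assoc, hDdef, trace_mul_vecMulVec, ← Matrix.mulVec_mulVec,
      Matrix.dotProduct_mulVec, hEvec, smul_dotProduct, smul_eq_mul, hsdef]
  have hminEP : minner E P = 2 * (lam * s) := by
    have : minner E P = Matrix.trace (E * P) := by
      show Matrix.trace (Eᵀ * P) = _
      rw [hEt]
    rw [this, hPdef, Matrix.mul_add, Matrix.trace_add, t1, t2]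
    ring
  -- norm of the direction
  have hDD : D * D = D := by
    rw [hDdef, _root_.vecMulVec_mul_vecMulVec, hv1, one_smul]
  have htrXU : Matrix.trace ((U * D)ᵀ * (U * D)) = v ⬝ᵥ ((Uᵀ * U) *ᵥ v) := by
    rw [Matrix.transpose_mul, hDt]
    have e : D * Uᵀ * (U * D) = D * (Uᵀ * U) * D := by simp only [Matrix.mul_assoc]
    rw [e, Matrix.trace_mul_cycle, hDD, Matrix.trace_mul_comm, hDdef, trace_mul_vecMulVec]
  have htrXV : Matrix.trace ((V * D)ᵀ * (V * D)) = v ⬝ᵥ ((Vᵀ * V) *ᵥ v) := by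
    rw [Matrix.transpose_mul, hDt]
    have e : D * Vᵀ * (V * D) = D * (Vᵀ * V) * D := by simp only [Matrix.mul_assoc]
    rw [e, Matrix.trace_mul_cycle, hDD, Matrix.trace_mul_comm, hDdef, trace_mul_vecMulVec]
  have hΔsq : ‖Δ‖ ^ 2 = s := by
    rw [norm_sq_eq, Fintype.sum_sum_type]
    have e1 : (∑ i : Fin n, ∑ j, Δ (Sum.inl i) j ^ 2) = α := by
      calc (∑ i : Fin n, ∑ j, Δ (Sum.inl i) j ^ 2) = ∑ i : Fin n, ∑ j, ((U*D) i j)^2 :=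
            Finset.sum_congr rfl fun i _ => Finset.sum_congr rfl fun j _ => by
              rw [hΔdef, Matrix.fromRows_apply_inl]
        _ = Matrix.trace ((U*D)ᵀ * (U*D)) := sum_sq_eq_trace (U*D)
        _ = v ⬝ᵥ ((Uᵀ*U) *ᵥ v) := htrXU
        _ = α := hUq
    have e2 : (∑ i : Fin m, ∑ j, Δ (Sum.inr i) j ^ 2) = β := by
      calc (∑ i : Fin m, ∑ j, Δ (Sum.inr i) j ^ 2) = ∑ i : Fin m, ∑ j, ((V*D) i j)^2 :=
            Finset.sum_congr rfl fun i _ => Finset.sum_congr rfl fun j _ => by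
              rw [hΔdef, Matrix.fromRows_apply_inr, Matrix.neg_apply, neg_sq]
        _ = Matrix.trace ((V*D)ᵀ * (V*D)) := sum_sq_eq_trace (V*D)
        _ = v ⬝ᵥ ((Vᵀ*V) *ᵥ v) := htrXV
        _ = β := hVq
    rw [e1, e2, hs_split]
  have hΔnorm : ‖Δ‖ = Real.sqrt s := by
    rw [← hΔsq, Real.sqrt_sq (norm_nonneg _)]
  -- differentiability of the objective
  have hq : DifferentiableAt ℝ
      (fun X : Matrix (Fin n ⊕ Fin m) (Fin r) ℝ => X.toRows₁ * X.toRows₂ᵀ) W := by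
    have hc : DifferentiableAt ℝ
        (fun X : Matrix (Fin n ⊕ Fin m) (Fin r) ℝ => (X.toRows₁, X.toRows₂ᵀ)) W :=
      ((toRows₁CLM (Fin n) (Fin m) (Fin r)).prod
        ((transposeCLM (Fin m) (Fin r)).comp (toRows₂CLM (Fin n) (Fin m) (Fin r)))).differentiableAt
    exact ((isBoundedBilinearMap_matmul (Fin n) (Fin r) (Fin m)).differentiableAt
      ((fun X : Matrix (Fin n ⊕ Fin m) (Fin r) ℝ => (X.toRows₁, X.toRows₂ᵀ)) W)).comp W hc
  have hgap : DifferentiableAt ℝ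
      (fun X : Matrix (Fin n ⊕ Fin m) (Fin r) ℝ => X.toRows₁ᵀ * X.toRows₁ - X.toRows₂ᵀ * X.toRows₂) W := by
    have h1 : DifferentiableAt ℝ
        (fun X : Matrix (Fin n ⊕ Fin m) (Fin r) ℝ => X.toRows₁ᵀ * X.toRows₁) W := by
      have hc : DifferentiableAt ℝ
          (fun X : Matrix (Fin n ⊕ Fin m) (Fin r) ℝ => (X.toRows₁ᵀ, X.toRows₁)) W :=
        (((transposeCLM (Fin n) (Fin r)).comp (toRows₁CLM (Fin n) (Fin m) (Fin r))).prod
          (toRows₁CLM (Fin n) (Fin m) (Fin r))).differentiableAt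
      exact ((isBoundedBilinearMap_matmul (Fin r) (Fin n) (Fin r)).differentiableAt
        ((fun X : Matrix (Fin n ⊕ Fin m) (Fin r) ℝ => (X.toRows₁ᵀ, X.toRows₁)) W)).comp W hc
    have h2 : DifferentiableAt ℝ
        (fun X : Matrix (Fin n ⊕ Fin m) (Fin r) ℝ => X.toRows₂ᵀ * X.toRows₂) W := by
      have hc : DifferentiableAt ℝ
          (fun X : Matrix (Fin n ⊕ Fin m) (Fin r) ℝ => (X.toRows₂ᵀ, X.toRows₂)) W :=
        (((transposeCLM (Fin m) (Fin r)).comp (toRows₂CLM (Fin n) (Fin m) (Fin r))).prod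
          (toRows₂CLM (Fin n) (Fin m) (Fin r))).differentiableAt
      exact ((isBoundedBilinearMap_matmul (Fin r) (Fin m) (Fin r)).differentiableAt
        ((fun X : Matrix (Fin n ⊕ Fin m) (Fin r) ℝ => (X.toRows₂ᵀ, X.toRows₂)) W)).comp W hc
    exact h1.sub h2
  have hrho_eq : rhoW f μ = fun X : Matrix (Fin n ⊕ Fin m) (Fin r) ℝ =>
      f (X.toRows₁ * X.toRows₂ᵀ) + μ/4 * minner (X.toRows₁ᵀ * X.toRows₁ - X.toRows₂ᵀ * X.toRows₂)
        (X.toRows₁ᵀ * X.toRows₁ - X.toRows₂ᵀ * X.toRows₂) := by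
    funext X
    rw [rhoW, minner_self]
  have hdiffW : DifferentiableAt ℝ (rhoW f μ) W := by
    rw [hrho_eq]
    refine DifferentiableAt.add ?_ ?_
    · exact ((hf.differentiable two_ne_zero)
        ((fun X : Matrix (Fin n ⊕ Fin m) (Fin r) ℝ => X.toRows₁ * X.toRows₂ᵀ) W)).comp W hq
    · refine DifferentiableAt.const_mul ?_ _
      have hmm := ((isBoundedBilinearMap_minner (Fin r) (Fin r)).differentiableAt
        ((fun X : Matrix (Fin n ⊕ Fin m) (Fin r) ℝ =>
          (X.toRows₁ᵀ * X.toRows₁ - X.toRows₂ᵀ * X.toRows₂,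
           X.toRows₁ᵀ * X.toRows₁ - X.toRows₂ᵀ * X.toRows₂)) W)).comp W (hgap.prodMk hgap)
      exact hmm
  -- the curve
  have hrows1 : ∀ t : ℝ, (W + t • Δ).toRows₁ = U + t • (U * D) := by
    intro t
    ext i j
    simp [Matrix.toRows₁_apply, Matrix.add_apply, Matrix.smul_apply, hΔdef,
      Matrix.fromRows_apply_inl, hU]
  have hrows2 : ∀ t : ℝ, (W + t • Δ).toRows₂ = V + t • (-(V * D)) := by
    intro t
    ext i j
    simp [Matrix.toRows₂_apply, Matrix.add_apply, Matrix.smul_apply, hΔdef,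
      Matrix.fromRows_apply_inr, hV]
  have hfun : (fun t : ℝ => rhoW f μ (W + t • Δ)) = fun t : ℝ =>
      f (U*Vᵀ - t^2 • (U*(D*(D*Vᵀ)))) + μ/4 * ∑ i, ∑ j, (E i j + t * P i j + t^2 * Qm i j)^2 := by
    funext t
    rw [rhoW, hrows1, hrows2, curve_eq2 U V D hDt t, curve_eq U V D hDt t,
      ← hSdef, ← hEdef, ← hPdef, ← hQdef, norm_sq_eq]
    congr 2
  -- derivative of the curve at 0
  have hd1 : HasDerivAt (fun t : ℝ => f (U*Vᵀ - t^2 • (U*(D*(D*Vᵀ))))) 0 0 := by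
    have hin : HasDerivAt (fun t : ℝ => U*Vᵀ - t^2 • (U*(D*(D*Vᵀ))))
        ((0:ℝ) • (U*(D*(D*Vᵀ)))) 0 := by
      have h0 := (hasDerivAt_pow 2 (0:ℝ)).smul_const (U*(D*(D*Vᵀ)))
      have h1 := (h0.neg).const_add (U*Vᵀ)
      have h2 : (fun t : ℝ => U*Vᵀ + -(t^2 • (U*(D*(D*Vᵀ))))) =
          fun t : ℝ => U*Vᵀ - t^2 • (U*(D*(D*Vᵀ))) := by
        funext t; rw [sub_eq_add_neg]
      rw [← h2]
      exact h1.congr_deriv (by norm_num)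
    have hF := ((hf.differentiable two_ne_zero) (U*Vᵀ - (0:ℝ)^2 • (U*(D*(D*Vᵀ))))).hasFDerivAt
    have hcomp := hF.comp_hasDerivAt 0 hin
    simp at hcomp
    exact hcomp
  have hcell : ∀ i j : Fin r, HasDerivAt
      (fun t : ℝ => (E i j + t * P i j + t^2 * Qm i j)^2) (2 * E i j * P i j) 0 := by
    intro i j
    have ha' := (hasDerivAt_id (0:ℝ)).mul_const (P i j)
    have hb := (hasDerivAt_pow 2 (0:ℝ)).mul_const (Qm i j)
    have h1 := (ha'.const_add (E i j)).add hb
    have h2 := h1.pow 2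
    exact h2.congr_deriv (by simp)
  have hd2 : HasDerivAt
      (fun t : ℝ => μ/4 * ∑ i, ∑ j, (E i j + t * P i j + t^2 * Qm i j)^2) (μ * (lam * s)) 0 := by
    have hsum : HasDerivAt (fun t : ℝ => ∑ i, ∑ j, (E i j + t * P i j + t^2 * Qm i j)^2)
        (∑ i, ∑ j, 2 * E i j * P i j) 0 :=
      HasDerivAt.fun_sum fun i _ => HasDerivAt.fun_sum fun j _ => hcell i j
    have h3 := hsum.const_mul (μ/4)
    have h4 : (∑ i, ∑ j, 2 * E i j * P i j) = 2 * minner E P := by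
      rw [minner_eq_sum, Finset.mul_sum]
      refine Finset.sum_congr rfl fun i _ => ?_
      rw [Finset.mul_sum]
      exact Finset.sum_congr rfl fun j _ => by ring
    rw [h4, hminEP] at h3
    exact h3.congr_deriv (by ring)
  have hderiv : HasDerivAt (fun t : ℝ => rhoW f μ (W + t • Δ)) (μ * (lam * s)) 0 := by
    rw [hfun]
    exact (hd1.add hd2).congr_deriv (by simp)
  have hkey : fderiv ℝ (rhoW f μ) W Δ = μ * (lam * s) := fderiv_eq_curve hdiffW hderiv
  have hinner : minner (mgrad (rhoW f μ) W) Δ = μ * (lam * s) := by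
    rw [minner_mgrad_eq, hkey]
  -- conclusion
  have hCS := abs_minner_le (mgrad (rhoW f μ) W) Δ
  rw [hinner, hΔnorm] at hCS
  have habs_eq : |μ * (lam * s)| = μ * (|lam| * s) := by
    rw [abs_mul, abs_mul, abs_of_pos hμ, abs_of_pos hs_pos]
  rw [habs_eq] at hCS
  have hsqrt_pos : 0 < Real.sqrt s := Real.sqrt_pos.mpr hs_pos
  have hss : Real.sqrt s * Real.sqrt s = s := Real.mul_self_sqrt hs_pos.le
  have h6 : μ * |lam| * Real.sqrt s ≤ ‖mgrad (rhoW f μ) W‖ := by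
    rw [← mul_le_mul_iff_of_pos_right hsqrt_pos]
    calc μ * |lam| * Real.sqrt s * Real.sqrt s = μ * (|lam| * s) := by rw [mul_assoc, hss]; ring
      _ ≤ ‖mgrad (rhoW f μ) W‖ * Real.sqrt s := hCS
  have h7 : Real.sqrt |lam| ≤ Real.sqrt s := Real.sqrt_le_sqrt habs
  have h8 : μ * |lam| * Real.sqrt |lam| ≤ ‖mgrad (rhoW f μ) W‖ := by
    refine le_trans ?_ h6
    have := mul_le_mul_of_nonneg_left h7 (by positivity : (0:ℝ) ≤ μ * |lam|)
    linarith
  have h9 : (ε/r : ℝ)^((3:ℝ)/2) ≤ |lam|^((3:ℝ)/2) :=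
    Real.rpow_le_rpow (by positivity) hεrlam (by norm_num)
  have h10 : |lam|^((3:ℝ)/2) = |lam| * Real.sqrt |lam| := by
    rw [show (3:ℝ)/2 = 1 + 1/2 by norm_num, Real.rpow_add hlam_pos, Real.rpow_one,
      Real.sqrt_eq_rpow]
  calc μ * (ε/r)^((3:ℝ)/2) ≤ μ * |lam|^((3:ℝ)/2) := mul_le_mul_of_nonneg_left h9 hμ.le
    _ = μ * |lam| * Real.sqrt |lam| := by rw [h10, mul_assoc]
    _ ≤ ‖mgrad (rhoW f μ) W‖ := h8
end
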